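/- arXiv:1906.08216 — 4 statements merged into one kernel-verified Lean document; each statement's English description precedes it below -/
import Mathlib

section
/- Let m, n be positive integers with gcd(m,n)=1 and let α be a weak composition of m into n parts. Then the n cyclic shifts cyc_1(α), cyc_2(α), …, cyc_n(α) are pairwise distinct. -/
open Finset Polynomial

/-- The cells of the skew shape `λ/μ`. -/
def skewCells (lam mu : YoungDiagram) : Finset (ℕ × ℕ) :=
  lam.cells \ mu.cells

/-- A semistandard Young tableau of skew shape `λ/μ`: a filling of the cells of `λ/μ`
with positive integers, weakly increasing along rows and strictly increasing down columns.
Cells outside the shape carry the value `0`. -/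
structure SkewSSYT (lam mu : YoungDiagram) where
  entry : ℕ → ℕ → ℕ
  pos' : ∀ i j, (i, j) ∈ skewCells lam mu → 0 < entry i j
  zeros' : ∀ i j, (i, j) ∉ skewCells lam mu → entry i j = 0
  row_weak' : ∀ i j1 j2, j1 < j2 → (i, j1) ∈ skewCells lam mu →
    (i, j2) ∈ skewCells lam mu → entry i j1 ≤ entry i j2
  col_strict' : ∀ i1 i2 j, i1 < i2 → (i1, j) ∈ skewCells lam mu →
    (i2, j) ∈ skewCells lam mu → entry i1 j < entry i2 j

/-- `w_k(T)`: the number of entries of `T` equal to `k`. -/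
def SkewSSYT.wt {lam mu : YoungDiagram} (T : SkewSSYT lam mu) (k : ℕ) : ℕ :=
  ((skewCells lam mu).filter fun c => T.entry c.1 c.2 = k).card

/-- `SSYT(λ/μ, n)`: semistandard skew tableaux of shape `λ/μ` with all entries at most `n`. -/
def SSYTbdd (lam mu : YoungDiagram) (n : ℕ) : Set (SkewSSYT lam mu) :=
  {T | ∀ i j, (i, j) ∈ skewCells lam mu → T.entry i j ≤ n}

/-- `SSYT(λ/μ, α)`: semistandard skew tableaux of shape `λ/μ` with exactly `α i`
entries equal to `i + 1` for each `i : Fin n` (so content `α`, entries in `{1, …, n}`). -/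
def SSYTcontent (lam mu : YoungDiagram) {n : ℕ} (α : Fin n → ℕ) : Set (SkewSSYT lam mu) :=
  {T | (∀ i : Fin n, T.wt ((i : ℕ) + 1) = α i) ∧
    ∀ i j, (i, j) ∈ skewCells lam mu → T.entry i j ≤ n}

/-- The cyclic shift `cyc_r(α)`, with `cyc r α i = α ((i + r) mod n)`. -/
def cyc {n : ℕ} (r : ℕ) (α : Fin n → ℕ) : Fin n → ℕ :=
  fun i => α ⟨((i : ℕ) + r) % n, Nat.mod_lt _ i.pos⟩

/-- `z_r = Σ_j j ⬝ α_{j+r}` (indices mod `n`): the weighted sum of the shifted composition. -/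
def zwt {n : ℕ} (α : Fin n → ℕ) (r : ℕ) : ℕ :=
  ∑ j : Fin n, ((j : ℕ) + 1) * cyc r α j

/-- `Σ_{j=1}^n j ⬝ w_j(T)`. -/
def weightedSum {lam mu : YoungDiagram} (n : ℕ) (T : SkewSSYT lam mu) : ℕ :=
  ∑ j : Fin n, ((j : ℕ) + 1) * T.wt ((j : ℕ) + 1)

/-- The (skew) Schur polynomial `s_{λ/μ}(x_1, …, x_n)` evaluated at `x`. -/
noncomputable def skewSchurEval (lam mu : YoungDiagram) (n : ℕ) {R : Type*} [CommSemiring R]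
    (x : Fin n → R) : R :=
  ∑ᶠ T ∈ SSYTbdd lam mu n, ∏ i : Fin n, x i ^ T.wt ((i : ℕ) + 1)

/-- `n(λ) = Σ_j (j - 1) λ_j`, i.e. the sum of the (0-indexed) row indices of the cells. -/
def nStat (lam : YoungDiagram) : ℕ :=
  ∑ c ∈ lam.cells, c.1
/-- If `gcd(m, n) = 1` and `α` is a weak composition of `m` into `n` parts, then the
cyclic shifts `cyc_1 α, …, cyc_n α` are pairwise distinct. -/
theorem cyclicShifts_pairwise_distinct (m n : ℕ) (hm : 0 < m) (hn : 0 < n)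
    (hgcd : Nat.gcd m n = 1) (α : Fin n → ℕ) (hα : ∑ i, α i = m) :
    ∀ r s, 1 ≤ r → r ≤ n → 1 ≤ s → s ≤ n → r ≠ s → cyc r α ≠ cyc s α := by
  intro r s hr1 hrn hs1 hsn hrs hcyc
  classical
  haveI : NeZero n := ⟨hn.ne'⟩
  set β : ZMod n → ℕ := fun x => α ⟨x.val, ZMod.val_lt x⟩ with hβ
  have hvaladd : ∀ (x : ZMod n) (t : ℕ), (x + (t : ZMod n)).val = (x.val + t) % n := by
    intro x t
    rw [ZMod.val_add, ZMod.val_natCast, Nat.add_mod_mod]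
  have key : ∀ x : ZMod n, β (x + (r : ZMod n)) = β (x + (s : ZMod n)) := by
    intro x
    have h1 := congrFun hcyc ⟨x.val, ZMod.val_lt x⟩
    simp only [cyc] at h1
    convert h1 using 3
    · exact hvaladd x r
    · exact hvaladd x s
  set d : ZMod n := (s : ZMod n) - (r : ZMod n) with hd
  have hper : ∀ x : ZMod n, β (x + d) = β x := by
    intro x
    have h0 := key (x - (r : ZMod n))
    have h2 : x + d = x - (r : ZMod n) + (s : ZMod n) := by rw [hd]; ring
    have h3 : x - (r : ZMod n) + (r : ZMod n) = x := by ring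
    rw [h2, ← h0, h3]
  have hdne : d ≠ 0 := by
    rw [hd, sub_ne_zero]
    intro h
    have h2 : s % n = r % n := (ZMod.natCast_eq_natCast_iff' s r n).mp h
    rcases eq_or_lt_of_le hrn with h3 | h3 <;> rcases eq_or_lt_of_le hsn with h4 | h4
    · exact hrs (h3.trans h4.symm)
    · subst h3; rw [Nat.mod_self, Nat.mod_eq_of_lt h4] at h2; omega
    · subst h4; rw [Nat.mod_self, Nat.mod_eq_of_lt h3] at h2; omega
    · rw [Nat.mod_eq_of_lt h4, Nat.mod_eq_of_lt h3] at h2; omega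
  set H : AddSubgroup (ZMod n) := AddSubgroup.zmultiples d with hH
  have hperH : ∀ h ∈ H, ∀ x : ZMod n, β (x + h) = β x := by
    have hS : ∀ k : ℤ, ∀ x : ZMod n, β (x + k • d) = β x := by
      intro k
      induction k using Int.induction_on with
      | zero => simp
      | succ k ih =>
        intro x
        have : x + ((k : ℤ) + 1) • d = (x + d) + (k : ℤ) • d := by
          rw [add_smul, one_smul]; abel
        rw [this, ih, hper]
      | pred k ih =>
        intro x
        have h1 : (x + (-(k : ℤ) - 1) • d) + d = x + (-(k : ℤ)) • d := by
          rw [sub_smul, one_smul]; abel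
        have := hper (x + (-(k : ℤ) - 1) • d)
        rw [h1, ih] at this
        exact this.symm
    intro h hh x
    obtain ⟨k, rfl⟩ := (AddSubgroup.mem_zmultiples_iff).mp hh
    exact hS k x
  -- sum over ZMod n equals m
  have hsum : ∑ x : ZMod n, β x = m := by
    rw [← hα]
    refine (Fintype.sum_equiv
      ⟨fun i : Fin n => ((i : ℕ) : ZMod n), fun x => ⟨x.val, ZMod.val_lt x⟩,
        fun i => Fin.ext (by simp [ZMod.val_natCast, Nat.mod_eq_of_lt i.isLt]),
        fun x => ZMod.natCast_rightInverse x⟩ (fun i => α i) β (fun i => ?_)).symm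
    exact congrArg α (Fin.ext (by simp [ZMod.val_natCast, Nat.mod_eq_of_lt i.isLt])).symm
  -- fiber decomposition
  haveI : Fintype H := Fintype.ofFinite _
  haveI : Fintype (ZMod n ⧸ H) := Fintype.ofFinite _
  set f : (ZMod n ⧸ H) × H → ZMod n := fun p => p.1.out + (p.2 : ZMod n) with hf
  have hmkH : ∀ h : H, ((h : ZMod n) : ZMod n ⧸ H) = 0 :=
    fun h => (QuotientAddGroup.eq_zero_iff _).mpr h.2
  have hfbij : Function.Bijective f := by
    constructor
    · rintro ⟨c1, h1⟩ ⟨c2, h2⟩ hfe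
      simp only [hf] at hfe
      have hc : c1 = c2 := by
        have := congrArg (QuotientAddGroup.mk (s := H)) hfe
        simpa [QuotientAddGroup.mk_add, hmkH, Quotient.out_eq] using this
      subst hc
      have : (h1 : ZMod n) = h2 := by
        exact add_left_cancel hfe
      exact Prod.ext rfl (Subtype.ext this)
    · intro x
      have hxmem : x - (QuotientAddGroup.mk (s := H) x).out ∈ H := by
        rw [← QuotientAddGroup.eq_zero_iff]
        simp [QuotientAddGroup.mk_sub, Quotient.out_eq]
      exact ⟨⟨QuotientAddGroup.mk x, ⟨_, hxmem⟩⟩, by simp [hf]⟩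
  have hsum2 : ∑ x : ZMod n, β x = Fintype.card H * ∑ c : ZMod n ⧸ H, β c.out := by
    rw [← Fintype.sum_bijective f hfbij (fun p => β (f p)) β (fun p => rfl),
      Fintype.sum_prod_type]
    rw [Finset.mul_sum]
    refine Finset.sum_congr rfl (fun c _ => ?_)
    have : ∀ h : H, β (f (c, h)) = β c.out := fun h => hperH h h.2 c.out
    simp only [this]
    simp [Finset.sum_const, Finset.card_univ, mul_comm]
  have hdvdm : Fintype.card H ∣ m := ⟨_, by rw [← hsum, hsum2]⟩
  have hdvdn : Fintype.card H ∣ n := by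
    have := AddSubgroup.card_addSubgroup_dvd_card H
    rwa [Nat.card_eq_fintype_card, Nat.card_eq_fintype_card, ZMod.card] at this
  have hone : Fintype.card H = 1 := Nat.eq_one_of_dvd_coprimes hgcd hdvdm hdvdn
  have hbot : H = ⊥ := by
    rw [← AddSubgroup.card_eq_one, Nat.card_eq_fintype_card]; exact hone
  have : d ∈ H := AddSubgroup.mem_zmultiples d
  rw [hbot, AddSubgroup.mem_bot] at this
  exact hdne this
end

section
/- Let m, n be positive integers with gcd(m,n)=1 and let α be a weak composition of m into n parts. For 1 ≤ r ≤ n define z_r := Σ_{j=1}^n j·α_{j+r}, indices taken modulo n. Then z_1, z_2, …, z_n are pairwise distinct modulo n; equivalently, {z_1 mod n, …, z_n mod n} = {0, 1, …, n−1}. -/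
open Finset Polynomial

lemma zwt_cast (n : ℕ) [NeZero n] (α : Fin n → ℕ) (r : ℕ) :
    ((zwt α r : ℕ) : ZMod n)
      = ((∑ k : Fin n, ((k : ℕ) + 1) * α k : ℕ) : ZMod n)
        - (r : ZMod n) * ((∑ k : Fin n, α k : ℕ) : ZMod n) := by
  have hn : 0 < n := Nat.pos_of_ne_zero (NeZero.ne n)
  set c : Fin n := (Fin.ofNat n r) with hc
  have hidx : ∀ j : Fin n, (⟨((j : ℕ) + r) % n, Nat.mod_lt _ j.pos⟩ : Fin n) = j + c := by
    intro j
    rw [Fin.add_def]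
    apply Fin.ext
    simp only [hc, Fin.val_ofNat]
    conv_lhs => rw [Nat.add_mod]
    conv_rhs => rw [Nat.add_mod]
    simp [Nat.mod_mod_of_dvd, Nat.mod_mod]
  have h1 : zwt α r = ∑ j : Fin n, ((j : ℕ) + 1) * α (j + c) := by
    unfold zwt cyc
    refine Finset.sum_congr rfl fun j _ => ?_
    rw [hidx j]
  have h2 : ((zwt α r : ℕ) : ZMod n)
      = ∑ k : Fin n, ((((k - c : Fin n) : ℕ) : ZMod n) + 1) * (α k : ZMod n) := by
    rw [h1]
    push_cast
    exact Fintype.sum_equiv (Equiv.addRight c)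
      (fun j => (((j : ℕ) : ZMod n) + 1) * (α (j + c) : ZMod n))
      (fun k => ((((k - c : Fin n) : ℕ) : ZMod n) + 1) * (α k : ZMod n))
      (fun j => by simp)
  have hval : ∀ k : Fin n, (((k - c : Fin n) : ℕ) : ZMod n) = ((k : ℕ) : ZMod n) - (r : ZMod n) := by
    intro k
    rw [Fin.sub_def]
    show (((n - (c : ℕ) + (k : ℕ)) % n : ℕ) : ZMod n) = _
    rw [ZMod.natCast_mod]
    have hcle : (c : ℕ) ≤ n := le_of_lt c.isLt
    push_cast [hcle]
    have hn0 : ((n : ℕ) : ZMod n) = 0 := ZMod.natCast_self n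
    have hcr : (((c : ℕ) : ℕ) : ZMod n) = (r : ZMod n) := by
      simp only [hc, Fin.val_ofNat, ZMod.natCast_mod]
    rw [hn0, hcr]
    ring
  rw [h2]
  push_cast
  calc ∑ k : Fin n, ((((k - c : Fin n) : ℕ) : ZMod n) + 1) * (α k : ZMod n)
      = ∑ k : Fin n, ((((k : ℕ) : ZMod n) + 1) * (α k : ZMod n) - (r : ZMod n) * (α k : ZMod n)) := by
        refine Finset.sum_congr rfl fun k _ => ?_
        rw [hval k]; ring
    _ = _ := by
        rw [Finset.sum_sub_distrib, ← Finset.mul_sum]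

/-- If `gcd(m, n) = 1`, the values `z_1, …, z_n` are pairwise distinct modulo `n`;
equivalently they hit every residue `0, 1, …, n − 1` exactly once. -/
theorem zwt_pairwise_distinct_mod (m n : ℕ) (hm : 0 < m) (hn : 0 < n)
    (hgcd : Nat.gcd m n = 1) (α : Fin n → ℕ) (hα : ∑ i, α i = m) :
    (∀ r s, 1 ≤ r → r ≤ n → 1 ≤ s → s ≤ n → r ≠ s → zwt α r % n ≠ zwt α s % n) ∧
    (Finset.Icc 1 n).image (fun r => zwt α r % n) = Finset.range n := by
  have hnz : NeZero n := ⟨hn.ne'⟩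
  have hkey : ∀ t, 1 ≤ t → t ≤ n → (if t % n = 0 then n else t % n) = t := by
    intro t h1 h2
    rcases eq_or_lt_of_le h2 with rfl | hlt
    · simp
    · rw [Nat.mod_eq_of_lt hlt, if_neg (by omega)]
  have hinj : ∀ r s, 1 ≤ r → r ≤ n → 1 ≤ s → s ≤ n → zwt α r % n = zwt α s % n → r = s := by
    intro r s h1r hrn h1s hsn heq
    have hz : ((zwt α r : ℕ) : ZMod n) = ((zwt α s : ℕ) : ZMod n) :=
      (ZMod.natCast_eq_natCast_iff _ _ _).mpr heq
    rw [zwt_cast, zwt_cast, hα] at hz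
    have hmul : (r : ZMod n) * (m : ZMod n) = (s : ZMod n) * (m : ZMod n) := by
      have := sub_right_injective hz
      linear_combination this
    have hu : IsUnit ((m : ℕ) : ZMod n) := (ZMod.isUnit_iff_coprime m n).mpr hgcd
    have hrs' : (r : ZMod n) = (s : ZMod n) := hu.mul_right_cancel hmul
    have hmod : r % n = s % n := (ZMod.natCast_eq_natCast_iff _ _ _).mp hrs'
    rw [← hkey r h1r hrn, ← hkey s h1s hsn, hmod]
  constructor
  · intro r s h1r hrn h1s hsn hne heq
    exact hne (hinj r s h1r hrn h1s hsn heq)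
  · apply Finset.eq_of_subset_of_card_le
    · intro x hx
      simp only [Finset.mem_image] at hx
      obtain ⟨r, _, rfl⟩ := hx
      exact Finset.mem_range.mpr (Nat.mod_lt _ hn)
    · rw [Finset.card_range, Finset.card_image_of_injOn, Nat.card_Icc]
      · omega
      · intro r hr s hs heq
        simp only [Finset.coe_Icc, Set.mem_Icc] at hr hs
        exact hinj r s hr.1 hr.2 hs.1 hs.2 heq
end

section
/- Let λ/μ be a skew shape, n a positive integer, and α, β weak compositions of |λ/μ| into n parts such that β is a permutation (rearrangement) of α. Then |SSYT(λ/μ, α)| = |SSYT(λ/μ, β)|; that is, the number of semistandard Young tableaux of shape λ/μ and content α does not depend on the ordering of the entries of α. -/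
open Finset Polynomial

namespace BK

open scoped Classical

variable {lam mu : YoungDiagram}

lemma skew_between {r1 c1 r2 c2 r c : ℕ}
    (h1 : (r1, c1) ∈ skewCells lam mu) (h2 : (r2, c2) ∈ skewCells lam mu)
    (hr1 : r1 ≤ r) (hr2 : r ≤ r2) (hc1 : c1 ≤ c) (hc2 : c ≤ c2) :
    (r, c) ∈ skewCells lam mu := by
  simp only [skewCells, Finset.mem_sdiff, YoungDiagram.mem_cells] at *
  exact ⟨lam.up_left_mem hr2 hc2 h2.1, fun hmu => h1.2 (mu.up_left_mem hr1 hc1 hmu)⟩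

lemma lt_rowLen_of_mem {r c : ℕ} (h : (r, c) ∈ skewCells lam mu) : c < lam.rowLen r := by
  simp only [skewCells, Finset.mem_sdiff, YoungDiagram.mem_cells] at h
  exact YoungDiagram.mem_iff_lt_rowLen.mp h.1

variable (T : SkewSSYT lam mu) (k : ℕ)

/-- column gap -/
lemma col_gap : ∀ (d r c : ℕ), (r, c) ∈ skewCells lam mu →
    (r + d + 1, c) ∈ skewCells lam mu → T.entry r c + d + 1 ≤ T.entry (r + d + 1) c := by
  intro d
  induction d with
  | zero => intro r c h1 h2; exact T.col_strict' r (r+1) c (by omega) h1 h2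
  | succ d ih =>
    intro r c h1 h2
    rw [show r + (d + 1) + 1 = r + d + 2 by omega] at h2 ⊢
    have hmid : (r + d + 1, c) ∈ skewCells lam mu :=
      skew_between h1 h2 (by omega) (by omega) le_rfl le_rfl
    have := ih r c h1 hmid
    have := T.col_strict' (r + d + 1) (r + d + 2) c (by omega) hmid h2
    omega

/-- entry k at `(r,c)` is "fixed" if the cell below is in the shape with entry `k+1`. -/
def FLow (r c : ℕ) : Prop :=
  (r, c) ∈ skewCells lam mu ∧ T.entry r c = k ∧
    ¬((r + 1, c) ∈ skewCells lam mu ∧ T.entry (r + 1) c = k + 1)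

def FHigh (r c : ℕ) : Prop :=
  (r, c) ∈ skewCells lam mu ∧ T.entry r c = k + 1 ∧
    ¬(0 < r ∧ (r - 1, c) ∈ skewCells lam mu ∧ T.entry (r - 1) c = k)

noncomputable def rowFree (r : ℕ) : Finset ℕ :=
  (Finset.range (lam.rowLen r)).filter fun c => FLow T k r c ∨ FHigh T k r c

noncomputable def anum (r : ℕ) : ℕ :=
  ((Finset.range (lam.rowLen r)).filter fun c => FLow T k r c).card

noncomputable def bnum (r : ℕ) : ℕ :=
  ((Finset.range (lam.rowLen r)).filter fun c => FHigh T k r c).card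

noncomputable def posn (r c : ℕ) : ℕ := ((rowFree T k r).filter fun x => x < c).card

noncomputable def BKe (r c : ℕ) : ℕ :=
  if FLow T k r c ∨ FHigh T k r c then
    (if posn T k r c < bnum T k r then k else k + 1)
  else T.entry r c

lemma mem_rowFree {r c : ℕ} : c ∈ rowFree T k r ↔ FLow T k r c ∨ FHigh T k r c := by
  rw [rowFree, Finset.mem_filter, Finset.mem_range]
  constructor
  · exact fun h => h.2
  · intro h
    refine ⟨?_, h⟩
    rcases h with h | h
    · exact lt_rowLen_of_mem h.1
    · exact lt_rowLen_of_mem h.1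

lemma flow_lt_fhigh {r c c' : ℕ} (h1 : FLow T k r c) (h2 : FHigh T k r c') : c < c' := by
  have e1 := h1.2.1
  have e2 := h2.2.1
  rcases lt_trichotomy c c' with h | h | h
  · exact h
  · exfalso; subst h; omega
  · exfalso
    have := T.row_weak' r c' c h h2.1 h1.1
    omega

lemma posn_lt_posn {r c c' : ℕ} (hc : c ∈ rowFree T k r) (h : c < c') :
    posn T k r c < posn T k r c' := by
  apply Finset.card_lt_card
  constructor
  · intro x hx
    rw [Finset.mem_filter] at hx ⊢
    exact ⟨hx.1, by omega⟩
  · intro hsub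
    have : c ∈ (rowFree T k r).filter fun x => x < c' := Finset.mem_filter.mpr ⟨hc, h⟩
    have := hsub this
    rw [Finset.mem_filter] at this
    omega

lemma card_rowFree (r : ℕ) : (rowFree T k r).card = anum T k r + bnum T k r := by
  rw [rowFree, anum, bnum, Finset.filter_or]
  apply Finset.card_union_of_disjoint
  rw [Finset.disjoint_filter]
  intro c _ h1 h2
  have := h1.2.1
  have := h2.2.1
  omega

lemma posn_lt_anum_iff {r c : ℕ} (hc : c ∈ rowFree T k r) :
    (posn T k r c < anum T k r ↔ FLow T k r c) := by
  rcases (mem_rowFree T k).mp hc with h | h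
  · simp only [h, iff_true]
    have hsub : (rowFree T k r).filter (fun x => x < c) ⊆
        ((Finset.range (lam.rowLen r)).filter fun x => FLow T k r x).erase c := by
      intro x hx
      rw [Finset.mem_filter] at hx
      rcases (mem_rowFree T k).mp hx.1 with h' | h'
      · rw [Finset.mem_erase, Finset.mem_filter, Finset.mem_range]
        exact ⟨by omega, lt_rowLen_of_mem h'.1, h'⟩
      · exact absurd (flow_lt_fhigh T k h h') (by omega)
    have hcmem : c ∈ (Finset.range (lam.rowLen r)).filter fun x => FLow T k r x :=
      Finset.mem_filter.mpr ⟨Finset.mem_range.mpr (lt_rowLen_of_mem h.1), h⟩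
    have := Finset.card_le_card hsub
    have := Finset.card_erase_of_mem hcmem
    have : 0 < anum T k r := Finset.card_pos.mpr ⟨c, hcmem⟩
    unfold posn anum at *
    omega
  · have hne : ¬ FLow T k r c := fun h' => by
      have := h'.2.1; have := h.2.1; omega
    simp only [hne, iff_false, not_lt]
    have hsub : ((Finset.range (lam.rowLen r)).filter fun x => FLow T k r x) ⊆
        (rowFree T k r).filter (fun x => x < c) := by
      intro x hx
      rw [Finset.mem_filter] at hx ⊢
      exact ⟨(mem_rowFree T k).mpr (Or.inl hx.2), flow_lt_fhigh T k hx.2 h⟩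
    exact Finset.card_le_card hsub

/-- in any finite set of naturals, the number of elements whose "index" is < m is min m card -/
lemma card_filter_posn (F : Finset ℕ) (m : ℕ) :
    (F.filter fun c => (F.filter (· < c)).card < m).card = min m F.card := by
  induction F using Finset.induction_on_max with
  | empty => simp
  | insert a s ha ih =>
    have hnot : a ∉ s := fun h => lt_irrefl a (ha a h)
    have key : ∀ c ∈ s, (insert a s).filter (· < c) = s.filter (· < c) := by
      intro c hc
      rw [Finset.filter_insert, if_neg (by have := ha c hc; omega)]
    have keya : (insert a s).filter (· < a) = s := by
      rw [Finset.filter_insert, if_neg (lt_irrefl a)]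
      apply Finset.filter_true_of_mem
      intro x hx; exact ha x hx
    have hsplit : (insert a s).filter (fun c => ((insert a s).filter (· < c)).card < m)
        = if s.card < m then insert a (s.filter fun c => (s.filter (· < c)).card < m)
          else s.filter fun c => (s.filter (· < c)).card < m := by
      rw [Finset.filter_insert, keya]
      have hfc : (s.filter fun c => ((insert a s).filter (· < c)).card < m)
          = s.filter fun c => (s.filter (· < c)).card < m := by
        apply Finset.filter_congr
        intro c hc
        rw [key c hc]
      rw [hfc]
    rw [hsplit, Finset.card_insert_of_notMem hnot]
    by_cases hm : s.card < m
    · rw [if_pos hm, Finset.card_insert_of_notMem (fun h => hnot (Finset.mem_filter.mp h).1), ih]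
      omega
    · rw [if_neg hm, ih]
      omega

lemma card_assigned_low (r : ℕ) :
    ((rowFree T k r).filter fun c => posn T k r c < bnum T k r).card = bnum T k r := by
  have hb : bnum T k r ≤ (rowFree T k r).card := by
    rw [card_rowFree]; omega
  have := card_filter_posn (rowFree T k r) (bnum T k r)
  unfold posn
  omega

lemma card_assigned_high (r : ℕ) :
    ((rowFree T k r).filter fun c => ¬ posn T k r c < bnum T k r).card = anum T k r := by
  have h1 := card_assigned_low T k r
  have h2 := Finset.card_filter_add_card_filter_not
    (s := rowFree T k r) (p := fun c => posn T k r c < bnum T k r)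
  have h3 := card_rowFree T k r
  omega

/-- fixed k's are a prefix of the k's in a row -/
lemma prefix_low {r c1 c2 : ℕ} (h12 : c1 < c2) (hc1 : (r, c1) ∈ skewCells lam mu)
    (he1 : T.entry r c1 = k) (hc2 : (r, c2) ∈ skewCells lam mu) (he2 : T.entry r c2 = k)
    (hb : (r + 1, c2) ∈ skewCells lam mu) (hbe : T.entry (r + 1) c2 = k + 1) :
    (r + 1, c1) ∈ skewCells lam mu ∧ T.entry (r + 1) c1 = k + 1 := by
  have hmem : (r + 1, c1) ∈ skewCells lam mu :=
    skew_between hc1 hb (by omega) (by omega) le_rfl (by omega)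
  refine ⟨hmem, ?_⟩
  have h1 := T.col_strict' r (r + 1) c1 (by omega) hc1 hmem
  have h2 := T.row_weak' (r + 1) c1 c2 h12 hmem hb
  omega

/-- fixed (k+1)'s are a suffix of the (k+1)'s in a row -/
lemma suffix_high {r c1 c2 : ℕ} (h12 : c1 < c2) (hr : 0 < r)
    (hc1 : (r, c1) ∈ skewCells lam mu) (he1 : T.entry r c1 = k + 1)
    (hc2 : (r, c2) ∈ skewCells lam mu) (he2 : T.entry r c2 = k + 1)
    (ha : (r - 1, c1) ∈ skewCells lam mu) (hae : T.entry (r - 1) c1 = k) :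
    (r - 1, c2) ∈ skewCells lam mu ∧ T.entry (r - 1) c2 = k := by
  have hmem : (r - 1, c2) ∈ skewCells lam mu :=
    skew_between ha hc2 le_rfl (by omega) (by omega) le_rfl
  refine ⟨hmem, ?_⟩
  have h1 := T.col_strict' (r - 1) r c2 (by omega) hmem hc2
  have h2 := T.row_weak' (r - 1) c1 c2 h12 ha hmem
  omega

lemma BKe_of_not_free {r c : ℕ} (h : ¬(FLow T k r c ∨ FHigh T k r c)) :
    BKe T k r c = T.entry r c := if_neg h

lemma BKe_mem_of_free {r c : ℕ} (h : FLow T k r c ∨ FHigh T k r c) :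
    BKe T k r c = k ∨ BKe T k r c = k + 1 := by
  rw [BKe, if_pos h]
  split <;> simp

lemma entry_mem_of_free {r c : ℕ} (h : FLow T k r c ∨ FHigh T k r c) :
    T.entry r c = k ∨ T.entry r c = k + 1 := by
  rcases h with h | h
  · exact Or.inl h.2.1
  · exact Or.inr h.2.1

lemma BKe_eq_of_free {r c : ℕ} (h : FLow T k r c ∨ FHigh T k r c) :
    BKe T k r c = if posn T k r c < bnum T k r then k else k + 1 := if_pos h

lemma BK_pos (hk : 0 < k) (r c : ℕ) (hmem : (r, c) ∈ skewCells lam mu) :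
    0 < BKe T k r c := by
  by_cases h : FLow T k r c ∨ FHigh T k r c
  · rcases BKe_mem_of_free T k h with h' | h' <;> omega
  · rw [BKe_of_not_free T k h]
    exact T.pos' r c hmem

lemma BK_zeros (r c : ℕ) (hmem : (r, c) ∉ skewCells lam mu) :
    BKe T k r c = 0 := by
  have h : ¬(FLow T k r c ∨ FHigh T k r c) := by
    rintro (h | h) <;> exact hmem h.1
  rw [BKe_of_not_free T k h]
  exact T.zeros' r c hmem

lemma BK_row_weak (r c1 c2 : ℕ) (h12 : c1 < c2) (hm1 : (r, c1) ∈ skewCells lam mu)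
    (hm2 : (r, c2) ∈ skewCells lam mu) : BKe T k r c1 ≤ BKe T k r c2 := by
  have hrw := T.row_weak' r c1 c2 h12 hm1 hm2
  by_cases h1 : FLow T k r c1 ∨ FHigh T k r c1
  <;> by_cases h2 : FLow T k r c2 ∨ FHigh T k r c2
  · -- both free
    rw [BKe_eq_of_free T k h1, BKe_eq_of_free T k h2]
    have hpos := posn_lt_posn T k ((mem_rowFree T k).mpr h1) h12
    split_ifs <;> omega
  · -- c1 free, c2 not
    rw [BKe_of_not_free T k h2]
    have ho2 : k + 1 ≤ T.entry r c2 := by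
      rcases entry_mem_of_free T k h1 with h' | h'
      · -- old entry at c1 is k
        rcases Nat.lt_or_ge (T.entry r c2) (k + 1) with hlt | hge
        · exfalso
          have he2 : T.entry r c2 = k := by omega
          -- c2 is a non-free k, hence fixed low
          have hfix : (r + 1, c2) ∈ skewCells lam mu ∧ T.entry (r + 1) c2 = k + 1 := by
            by_contra hcon
            exact h2 (Or.inl ⟨hm2, he2, hcon⟩)
          -- then c1 is also fixed low, contradicting freeness
          have := prefix_low T k h12 hm1 h' hm2 he2 hfix.1 hfix.2
          rcases h1 with hf | hf
          · exact hf.2.2 this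
          · have := hf.2.1; omega
        · exact hge
      · omega
    rcases BKe_mem_of_free T k h1 with h' | h' <;> omega
  · -- c1 not free, c2 free
    rw [BKe_of_not_free T k h1]
    have ho1 : T.entry r c1 ≤ k := by
      rcases entry_mem_of_free T k h2 with h' | h'
      · omega
      · rcases Nat.lt_or_ge k (T.entry r c1) with hgt | hle
        · exfalso
          have he1 : T.entry r c1 = k + 1 := by omega
          have hfix : 0 < r ∧ (r - 1, c1) ∈ skewCells lam mu ∧ T.entry (r - 1) c1 = k := by
            by_contra hcon
            exact h1 (Or.inr ⟨hm1, he1, hcon⟩)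
          have := suffix_high T k h12 hfix.1 hm1 he1 hm2 h' hfix.2.1 hfix.2.2
          rcases h2 with hf | hf
          · have := hf.2.1; omega
          · exact hf.2.2 ⟨hfix.1, this⟩
        · exact hle
    rcases BKe_mem_of_free T k h2 with h' | h' <;> omega
  · rw [BKe_of_not_free T k h1, BKe_of_not_free T k h2]
    exact hrw

lemma BK_col_strict (r1 r2 c : ℕ) (h12 : r1 < r2) (hm1 : (r1, c) ∈ skewCells lam mu)
    (hm2 : (r2, c) ∈ skewCells lam mu) : BKe T k r1 c < BKe T k r2 c := by
  have hcs := T.col_strict' r1 r2 c h12 hm1 hm2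
  have hgap : T.entry r1 c + (r2 - r1) ≤ T.entry r2 c := by
    have h := col_gap T (r2 - r1 - 1) r1 c hm1 (by
      rw [show r1 + (r2 - r1 - 1) + 1 = r2 by omega]; exact hm2)
    rw [show r1 + (r2 - r1 - 1) + 1 = r2 by omega] at h
    omega
  by_cases h1 : FLow T k r1 c ∨ FHigh T k r1 c
  <;> by_cases h2 : FLow T k r2 c ∨ FHigh T k r2 c
  · -- both free: impossible
    exfalso
    rcases entry_mem_of_free T k h1 with e1 | e1 <;>
      rcases entry_mem_of_free T k h2 with e2 | e2
    · omega
    · -- r1 has k, r2 has k+1 : adjacent, so r1 fixed low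
      have hr2 : r2 = r1 + 1 := by omega
      subst hr2
      rcases h1 with hf | hf
      · exact hf.2.2 ⟨hm2, e2⟩
      · have := hf.2.1; omega
    · omega
    · omega
  · -- r1 free, r2 not
    rw [BKe_of_not_free T k h2]
    rcases entry_mem_of_free T k h1 with e1 | e1
    · -- old entry k at r1, so T.entry r2 c ≥ k+1 ; show ≥ k+2
      have : k + 2 ≤ T.entry r2 c := by
        rcases Nat.lt_or_ge (T.entry r2 c) (k + 2) with hlt | hge
        · exfalso
          have e2 : T.entry r2 c = k + 1 := by omega
          have hr2 : r2 = r1 + 1 := by omega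
          subst hr2
          rcases h1 with hf | hf
          · exact hf.2.2 ⟨hm2, e2⟩
          · have := hf.2.1; omega
        · exact hge
      rcases BKe_mem_of_free T k h1 with h' | h' <;> omega
    · have : k + 2 ≤ T.entry r2 c := by omega
      rcases BKe_mem_of_free T k h1 with h' | h' <;> omega
  · -- r2 free, r1 not
    rw [BKe_of_not_free T k h1]
    rcases entry_mem_of_free T k h2 with e2 | e2
    · have : T.entry r1 c < k := by omega
      rcases BKe_mem_of_free T k h2 with h' | h' <;> omega
    · -- old entry k+1 at r2 which is free-high; show T.entry r1 c < k
      have : T.entry r1 c < k := by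
        rcases Nat.lt_or_ge (T.entry r1 c) k with hlt | hge
        · exact hlt
        · exfalso
          have e1 : T.entry r1 c = k := by omega
          have hr2 : r2 = r1 + 1 := by omega
          rcases h2 with hf | hf
          · have := hf.2.1; omega
          · exact hf.2.2 ⟨by omega, by rw [show r2 - 1 = r1 by omega]; exact hm1,
              by rw [show r2 - 1 = r1 by omega]; exact e1⟩
      rcases BKe_mem_of_free T k h2 with h' | h' <;> omega
  · rw [BKe_of_not_free T k h1, BKe_of_not_free T k h2]
    exact hcs

/-- The Bender-Knuth involution. -/
noncomputable def BKT (hk : 0 < k) : SkewSSYT lam mu where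
  entry := BKe T k
  pos' := BK_pos T k hk
  zeros' := BK_zeros T k
  row_weak' := BK_row_weak T k
  col_strict' := BK_col_strict T k

@[simp] lemma BKT_entry (hk : 0 < k) : (BKT T k hk).entry = BKe T k := rfl

lemma SkewSSYT_ext {T1 T2 : SkewSSYT lam mu} (h : T1.entry = T2.entry) : T1 = T2 := by
  cases T1; cases T2; simpa using h

lemma old_mem_of_new {r c : ℕ} (h : BKe T k r c = k ∨ BKe T k r c = k + 1) :
    T.entry r c = k ∨ T.entry r c = k + 1 := by
  by_cases hf : FLow T k r c ∨ FHigh T k r c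
  · exact entry_mem_of_free T k hf
  · rw [BKe_of_not_free T k hf] at h; exact h

lemma fixed_pair_BK (r c : ℕ) (hm : (r, c) ∈ skewCells lam mu) :
    (BKe T k r c = k ∧ (r + 1, c) ∈ skewCells lam mu ∧ BKe T k (r + 1) c = k + 1) ↔
    (T.entry r c = k ∧ (r + 1, c) ∈ skewCells lam mu ∧ T.entry (r + 1) c = k + 1) := by
  constructor
  · rintro ⟨h1, hm2, h2⟩
    refine ⟨?_, hm2, ?_⟩ <;>
    · have o1 := old_mem_of_new T k (Or.inl h1)
      have o2 := old_mem_of_new T k (Or.inr h2)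
      have := T.col_strict' r (r + 1) c (by omega) hm hm2
      omega
  · rintro ⟨h1, hm2, h2⟩
    have hnf1 : ¬(FLow T k r c ∨ FHigh T k r c) := by
      rintro (hf | hf)
      · exact hf.2.2 ⟨hm2, h2⟩
      · have := hf.2.1; omega
    have hnf2 : ¬(FLow T k (r + 1) c ∨ FHigh T k (r + 1) c) := by
      rintro (hf | hf)
      · have := hf.2.1; omega
      · exact hf.2.2 ⟨by omega, by simpa using hm, by simpa using h1⟩
    rw [BKe_of_not_free T k hnf1, BKe_of_not_free T k hnf2]
    exact ⟨h1, hm2, h2⟩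

variable (hk : 0 < k)

lemma free_BK (r c : ℕ) :
    (FLow (BKT T k hk) k r c ∨ FHigh (BKT T k hk) k r c) ↔
    (FLow T k r c ∨ FHigh T k r c) := by
  constructor
  · intro h
    have hm : (r, c) ∈ skewCells lam mu := by rcases h with h | h <;> exact h.1
    have hnew : BKe T k r c = k ∨ BKe T k r c = k + 1 := by
      rcases h with h | h
      · exact Or.inl h.2.1
      · exact Or.inr h.2.1
    have hold := old_mem_of_new T k hnew
    by_contra hnf
    rcases hold with ho | ho
    · -- old entry k, not free: fixed low
      have hfix : (r + 1, c) ∈ skewCells lam mu ∧ T.entry (r + 1) c = k + 1 := by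
        by_contra hcon
        exact hnf (Or.inl ⟨hm, ho, hcon⟩)
      have hnew2 := (fixed_pair_BK T k r c hm).mpr ⟨ho, hfix.1, hfix.2⟩
      rcases h with hf | hf
      · exact hf.2.2 ⟨hnew2.2.1, hnew2.2.2⟩
      · have : BKe T k r c = k + 1 := hf.2.1
        omega
    · -- old entry k+1, not free: fixed high
      have hfix : 0 < r ∧ (r - 1, c) ∈ skewCells lam mu ∧ T.entry (r - 1) c = k := by
        by_contra hcon
        exact hnf (Or.inr ⟨hm, ho, hcon⟩)
      have hnew2 := (fixed_pair_BK T k (r - 1) c hfix.2.1).mpr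
        ⟨hfix.2.2, by rw [show r - 1 + 1 = r by omega]; exact hm,
          by rw [show r - 1 + 1 = r by omega]; exact ho⟩
      rcases h with hf | hf
      · have : BKe T k r c = k := hf.2.1
        have := hnew2.2.2
        rw [show r - 1 + 1 = r by omega] at this
        omega
      · exact hf.2.2 ⟨hfix.1, hfix.2.1, hnew2.1⟩
  · intro h
    have hm : (r, c) ∈ skewCells lam mu := by rcases h with h | h <;> exact h.1
    have hnew := BKe_mem_of_free T k h
    by_contra hnf
    rcases hnew with ho | ho
    · have hfix : (r + 1, c) ∈ skewCells lam mu ∧ BKe T k (r + 1) c = k + 1 := by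
        by_contra hcon
        exact hnf (Or.inl ⟨hm, ho, hcon⟩)
      have hold := (fixed_pair_BK T k r c hm).mp ⟨ho, hfix.1, hfix.2⟩
      rcases h with hf | hf
      · exact hf.2.2 ⟨hold.2.1, hold.2.2⟩
      · have := hf.2.1; omega
    · have hfix : 0 < r ∧ (r - 1, c) ∈ skewCells lam mu ∧ BKe T k (r - 1) c = k := by
        by_contra hcon
        exact hnf (Or.inr ⟨hm, ho, hcon⟩)
      have hold := (fixed_pair_BK T k (r - 1) c hfix.2.1).mp
        ⟨hfix.2.2, by rw [show r - 1 + 1 = r by omega]; exact hm,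
          by rw [show r - 1 + 1 = r by omega]; exact ho⟩
      rcases h with hf | hf
      · have := hf.2.1
        have h2 := hold.2.2
        rw [show r - 1 + 1 = r by omega] at h2
        omega
      · exact hf.2.2 ⟨hfix.1, hfix.2.1, hold.1⟩

lemma rowFree_BK (r : ℕ) : rowFree (BKT T k hk) k r = rowFree T k r := by
  ext c
  rw [mem_rowFree, mem_rowFree]
  exact free_BK T k hk r c

lemma posn_BK (r c : ℕ) : posn (BKT T k hk) k r c = posn T k r c := by
  rw [posn, posn, rowFree_BK]

lemma bnum_BK (r : ℕ) : bnum (BKT T k hk) k r = anum T k r := by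
  rw [bnum]
  have : (Finset.range (lam.rowLen r)).filter (fun c => FHigh (BKT T k hk) k r c)
      = (rowFree T k r).filter fun c => ¬ posn T k r c < bnum T k r := by
    ext c
    simp only [Finset.mem_filter, Finset.mem_range]
    constructor
    · rintro ⟨hcr, hf⟩
      have hfree : FLow T k r c ∨ FHigh T k r c := (free_BK T k hk r c).mp (Or.inr hf)
      refine ⟨(mem_rowFree T k).mpr hfree, ?_⟩
      have he : BKe T k r c = k + 1 := hf.2.1
      rw [BKe_eq_of_free T k hfree] at he
      split at he
      · omega
      · assumption
    · rintro ⟨hcr, hnp⟩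
      have hfree := (mem_rowFree T k).mp hcr
      have he : BKe T k r c = k + 1 := by
        rw [BKe_eq_of_free T k hfree, if_neg hnp]
      have hfree' := (free_BK T k hk r c).mpr hfree
      have hm : (r, c) ∈ skewCells lam mu := by rcases hfree with h | h <;> exact h.1
      refine ⟨lt_rowLen_of_mem hm, ?_⟩
      rcases hfree' with hf | hf
      · exfalso; have : BKe T k r c = k := hf.2.1; omega
      · exact hf
  rw [this]
  exact card_assigned_high T k r

lemma BK_BK : BKT (BKT T k hk) k hk = T := by
  apply SkewSSYT_ext
  funext r c
  show BKe (BKT T k hk) k r c = T.entry r c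
  by_cases hfree : FLow T k r c ∨ FHigh T k r c
  · have hfree' := (free_BK T k hk r c).mpr hfree
    rw [BKe_eq_of_free (BKT T k hk) k hfree', posn_BK, bnum_BK]
    have hiff := posn_lt_anum_iff T k ((mem_rowFree T k).mpr hfree)
    by_cases hl : FLow T k r c
    · rw [if_pos (hiff.mpr hl)]; exact hl.2.1.symm
    · rw [if_neg (fun hp => hl (hiff.mp hp))]
      rcases hfree with h | h
      · exact absurd h hl
      · exact h.2.1.symm
  · have hfree' := fun h => hfree ((free_BK T k hk r c).mp h)
    rw [BKe_of_not_free (BKT T k hk) k hfree']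
    show BKe T k r c = T.entry r c
    exact BKe_of_not_free T k hfree

lemma wt_BK_other (v : ℕ) (hv1 : v ≠ k) (hv2 : v ≠ k + 1) :
    (BKT T k hk).wt v = T.wt v := by
  unfold SkewSSYT.wt
  congr 1
  apply Finset.filter_congr
  intro p hp
  show BKe T k p.1 p.2 = v ↔ T.entry p.1 p.2 = v
  by_cases hf : FLow T k p.1 p.2 ∨ FHigh T k p.1 p.2
  · have h1 := BKe_mem_of_free T k hf
    have h2 := entry_mem_of_free T k hf
    constructor <;> intro <;> omega
  · rw [BKe_of_not_free T k hf]

noncomputable def fixedLowCells : Finset (ℕ × ℕ) :=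
  (skewCells lam mu).filter fun p => T.entry p.1 p.2 = k ∧
    (p.1 + 1, p.2) ∈ skewCells lam mu ∧ T.entry (p.1 + 1) p.2 = k + 1

noncomputable def fixedHighCells : Finset (ℕ × ℕ) :=
  (skewCells lam mu).filter fun p => T.entry p.1 p.2 = k + 1 ∧
    0 < p.1 ∧ (p.1 - 1, p.2) ∈ skewCells lam mu ∧ T.entry (p.1 - 1) p.2 = k

lemma card_fixed_eq : (fixedLowCells T k).card = (fixedHighCells T k).card := by
  apply Finset.card_bij (i := fun p _ => (p.1 + 1, p.2))
  · intro p hp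
    rw [fixedLowCells, Finset.mem_filter] at hp
    rw [fixedHighCells, Finset.mem_filter]
    exact ⟨hp.2.2.1, by simpa using hp.2.2.2, by omega, by simpa using hp.1, by simpa using hp.2.1⟩
  · intro p1 _ p2 _ h
    rw [Prod.mk.injEq] at h
    exact Prod.ext (by omega) h.2
  · intro p hp
    rw [fixedHighCells, Finset.mem_filter] at hp
    refine ⟨(p.1 - 1, p.2), ?_, ?_⟩
    · rw [fixedLowCells, Finset.mem_filter]
      refine ⟨hp.2.2.2.1, hp.2.2.2.2, ?_, ?_⟩
      · rw [show p.1 - 1 + 1 = p.1 by omega]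
        simpa using hp.1
      · rw [show p.1 - 1 + 1 = p.1 by omega]
        exact hp.2.1
    · rw [show p.1 - 1 + 1 = p.1 by omega]

/-- counting the cells of a row of the skew diagram satisfying a property -/
lemma card_row_filter (Q : ℕ → ℕ → Prop) (hQ : ∀ r c, Q r c → (r, c) ∈ skewCells lam mu)
    (r : ℕ) :
    ((skewCells lam mu).filter fun p => Q p.1 p.2 ∧ p.1 = r).card
      = ((Finset.range (lam.rowLen r)).filter fun c => Q r c).card := by
  apply Finset.card_bij (i := fun p _ => p.2)
  · intro p hp
    rw [Finset.mem_filter] at hp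
    rw [Finset.mem_filter, Finset.mem_range]
    obtain ⟨hm, hq, hr⟩ := hp
    subst hr
    exact ⟨lt_rowLen_of_mem (by simpa using hm), hq⟩
  · intro p1 h1 p2 h2 h
    rw [Finset.mem_filter] at h1 h2
    exact Prod.ext (h1.2.2.trans h2.2.2.symm) h
  · intro c hc
    rw [Finset.mem_filter, Finset.mem_range] at hc
    exact ⟨(r, c), Finset.mem_filter.mpr ⟨hQ r c hc.2, hc.2, rfl⟩, rfl⟩

lemma card_skew_filter_eq (Q Q' : ℕ → ℕ → Prop)
    (hQ : ∀ r c, Q r c → (r, c) ∈ skewCells lam mu)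
    (hQ' : ∀ r c, Q' r c → (r, c) ∈ skewCells lam mu)
    (hrow : ∀ r, ((Finset.range (lam.rowLen r)).filter fun c => Q r c).card
      = ((Finset.range (lam.rowLen r)).filter fun c => Q' r c).card) :
    ((skewCells lam mu).filter fun p => Q p.1 p.2).card
      = ((skewCells lam mu).filter fun p => Q' p.1 p.2).card := by
  have key : ∀ (P : ℕ → ℕ → Prop), (∀ r c, P r c → (r, c) ∈ skewCells lam mu) →
      ((skewCells lam mu).filter fun p => P p.1 p.2).card
        = ∑ r ∈ (skewCells lam mu).image Prod.fst,
            ((Finset.range (lam.rowLen r)).filter fun c => P r c).card := by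
    intro P hP
    rw [Finset.card_eq_sum_card_fiberwise (f := Prod.fst)
      (t := (skewCells lam mu).image Prod.fst)
      (fun x hx => Finset.mem_image_of_mem _ (Finset.mem_filter.mp hx).1)]
    apply Finset.sum_congr rfl
    intro r _
    rw [← card_row_filter (lam := lam) (mu := mu) P hP r]
    congr 1
    rw [Finset.filter_filter]
  rw [key Q hQ, key Q' hQ']
  exact Finset.sum_congr rfl fun r _ => hrow r

lemma wt_BK_low : (BKT T k hk).wt k = T.wt (k + 1) := by
  unfold SkewSSYT.wt
  -- split the left side
  have hL : (skewCells lam mu).filter (fun p => BKe T k p.1 p.2 = k)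
      = fixedLowCells T k ∪ ((skewCells lam mu).filter fun p =>
          (FLow T k p.1 p.2 ∨ FHigh T k p.1 p.2) ∧ posn T k p.1 p.2 < bnum T k p.1) := by
    ext p
    rw [Finset.mem_union, fixedLowCells, Finset.mem_filter, Finset.mem_filter, Finset.mem_filter]
    constructor
    · rintro ⟨hm, he⟩
      by_cases hf : FLow T k p.1 p.2 ∨ FHigh T k p.1 p.2
      · refine Or.inr ⟨hm, hf, ?_⟩
        rw [BKe_eq_of_free T k hf] at he
        by_contra hc
        rw [if_neg hc] at he
        omega
      · rw [BKe_of_not_free T k hf] at he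
        refine Or.inl ⟨hm, he, ?_⟩
        by_contra hc
        exact hf (Or.inl ⟨hm, he, hc⟩)
    · rintro (⟨hm, he, hfix⟩ | ⟨hm, hf, hp⟩)
      · have hnf : ¬(FLow T k p.1 p.2 ∨ FHigh T k p.1 p.2) := by
          rintro (h | h)
          · exact h.2.2 hfix
          · have := h.2.1; omega
        exact ⟨hm, by rw [BKe_of_not_free T k hnf]; exact he⟩
      · exact ⟨hm, by rw [BKe_eq_of_free T k hf, if_pos hp]⟩
  -- split the right side
  have hR : (skewCells lam mu).filter (fun p => T.entry p.1 p.2 = k + 1)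
      = fixedHighCells T k ∪ ((skewCells lam mu).filter fun p => FHigh T k p.1 p.2) := by
    ext p
    rw [Finset.mem_union, fixedHighCells, Finset.mem_filter, Finset.mem_filter, Finset.mem_filter]
    constructor
    · rintro ⟨hm, he⟩
      by_cases hf : FHigh T k p.1 p.2
      · exact Or.inr ⟨hm, hf⟩
      · refine Or.inl ⟨hm, he, ?_⟩
        by_contra hc
        exact hf ⟨hm, he, hc⟩
    · rintro (⟨hm, he, _⟩ | ⟨hm, hf⟩)
      · exact ⟨hm, he⟩
      · exact ⟨hm, hf.2.1⟩
  have hdL : Disjoint (fixedLowCells T k) ((skewCells lam mu).filter fun p =>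
      (FLow T k p.1 p.2 ∨ FHigh T k p.1 p.2) ∧ posn T k p.1 p.2 < bnum T k p.1) := by
    rw [Finset.disjoint_left]
    intro p hp hp'
    rw [fixedLowCells, Finset.mem_filter] at hp
    rw [Finset.mem_filter] at hp'
    rcases hp'.2.1 with h | h
    · exact h.2.2 ⟨hp.2.2.1, hp.2.2.2⟩
    · have := h.2.1; have := hp.2.1; omega
  have hdR : Disjoint (fixedHighCells T k)
      ((skewCells lam mu).filter fun p => FHigh T k p.1 p.2) := by
    rw [Finset.disjoint_left]
    intro p hp hp'
    rw [fixedHighCells, Finset.mem_filter] at hp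
    rw [Finset.mem_filter] at hp'
    exact hp'.2.2.2 ⟨hp.2.2.1, hp.2.2.2.1, hp.2.2.2.2⟩
  have hfiber : ((skewCells lam mu).filter fun p =>
      (FLow T k p.1 p.2 ∨ FHigh T k p.1 p.2) ∧ posn T k p.1 p.2 < bnum T k p.1).card
      = ((skewCells lam mu).filter fun p => FHigh T k p.1 p.2).card := by
    have key := card_skew_filter_eq (lam := lam) (mu := mu)
      (Q := fun r c => (FLow T k r c ∨ FHigh T k r c) ∧ posn T k r c < bnum T k r)
      (Q' := fun r c => FHigh T k r c)
      (by intro r c h; rcases h.1 with h | h <;> exact h.1)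
      (by intro r c h; exact h.1)
      ?_
    · convert key using 2 <;> congr
    intro r
    have h0 : ((Finset.range (lam.rowLen r)).filter fun c =>
        (FLow T k r c ∨ FHigh T k r c) ∧ posn T k r c < bnum T k r).card
        = ((rowFree T k r).filter fun c => posn T k r c < bnum T k r).card := by
      rw [rowFree, Finset.filter_filter]
    have h1 := card_assigned_low T k r
    have h2 : ((Finset.range (lam.rowLen r)).filter fun c => FHigh T k r c).card
        = bnum T k r := rfl
    convert (h0.trans h1).trans h2.symm using 2 <;> congr
  show ((skewCells lam mu).filter fun p => BKe T k p.1 p.2 = k).card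
      = ((skewCells lam mu).filter fun p => T.entry p.1 p.2 = k + 1).card
  rw [hL, hR, Finset.card_union_of_disjoint hdL, Finset.card_union_of_disjoint hdR,
    card_fixed_eq, hfiber]

lemma wt_BK_high : (BKT T k hk).wt (k + 1) = T.wt k := by
  unfold SkewSSYT.wt
  have hL : (skewCells lam mu).filter (fun p => BKe T k p.1 p.2 = k + 1)
      = fixedHighCells T k ∪ ((skewCells lam mu).filter fun p =>
          (FLow T k p.1 p.2 ∨ FHigh T k p.1 p.2) ∧ ¬ posn T k p.1 p.2 < bnum T k p.1) := by
    ext p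
    rw [Finset.mem_union, fixedHighCells, Finset.mem_filter, Finset.mem_filter, Finset.mem_filter]
    constructor
    · rintro ⟨hm, he⟩
      by_cases hf : FLow T k p.1 p.2 ∨ FHigh T k p.1 p.2
      · refine Or.inr ⟨hm, hf, ?_⟩
        rw [BKe_eq_of_free T k hf] at he
        intro hc
        rw [if_pos hc] at he
        omega
      · rw [BKe_of_not_free T k hf] at he
        refine Or.inl ⟨hm, he, ?_⟩
        by_contra hc
        exact hf (Or.inr ⟨hm, he, hc⟩)
    · rintro (⟨hm, he, hfix⟩ | ⟨hm, hf, hp⟩)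
      · have hnf : ¬(FLow T k p.1 p.2 ∨ FHigh T k p.1 p.2) := by
          rintro (h | h)
          · have := h.2.1; omega
          · exact h.2.2 hfix
        exact ⟨hm, by rw [BKe_of_not_free T k hnf]; exact he⟩
      · exact ⟨hm, by rw [BKe_eq_of_free T k hf, if_neg hp]⟩
  have hR : (skewCells lam mu).filter (fun p => T.entry p.1 p.2 = k)
      = fixedLowCells T k ∪ ((skewCells lam mu).filter fun p => FLow T k p.1 p.2) := by
    ext p
    rw [Finset.mem_union, fixedLowCells, Finset.mem_filter, Finset.mem_filter, Finset.mem_filter]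
    constructor
    · rintro ⟨hm, he⟩
      by_cases hf : FLow T k p.1 p.2
      · exact Or.inr ⟨hm, hf⟩
      · refine Or.inl ⟨hm, he, ?_⟩
        by_contra hc
        exact hf ⟨hm, he, hc⟩
    · rintro (⟨hm, he, _⟩ | ⟨hm, hf⟩)
      · exact ⟨hm, he⟩
      · exact ⟨hm, hf.2.1⟩
  have hdL : Disjoint (fixedHighCells T k) ((skewCells lam mu).filter fun p =>
      (FLow T k p.1 p.2 ∨ FHigh T k p.1 p.2) ∧ ¬ posn T k p.1 p.2 < bnum T k p.1) := by
    rw [Finset.disjoint_left]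
    intro p hp hp'
    rw [fixedHighCells, Finset.mem_filter] at hp
    rw [Finset.mem_filter] at hp'
    rcases hp'.2.1 with h | h
    · have := h.2.1; have := hp.2.1; omega
    · exact h.2.2 ⟨hp.2.2.1, hp.2.2.2.1, hp.2.2.2.2⟩
  have hdR : Disjoint (fixedLowCells T k)
      ((skewCells lam mu).filter fun p => FLow T k p.1 p.2) := by
    rw [Finset.disjoint_left]
    intro p hp hp'
    rw [fixedLowCells, Finset.mem_filter] at hp
    rw [Finset.mem_filter] at hp'
    exact hp'.2.2.2 ⟨hp.2.2.1, hp.2.2.2⟩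
  have hfiber : ((skewCells lam mu).filter fun p =>
      (FLow T k p.1 p.2 ∨ FHigh T k p.1 p.2) ∧ ¬ posn T k p.1 p.2 < bnum T k p.1).card
      = ((skewCells lam mu).filter fun p => FLow T k p.1 p.2).card := by
    have key := card_skew_filter_eq (lam := lam) (mu := mu)
      (Q := fun r c => (FLow T k r c ∨ FHigh T k r c) ∧ ¬ posn T k r c < bnum T k r)
      (Q' := fun r c => FLow T k r c)
      (by intro r c h; rcases h.1 with h | h <;> exact h.1)
      (by intro r c h; exact h.1)
      ?_
    · convert key using 2 <;> congr
    intro r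
    have h0 : ((Finset.range (lam.rowLen r)).filter fun c =>
        (FLow T k r c ∨ FHigh T k r c) ∧ ¬ posn T k r c < bnum T k r).card
        = ((rowFree T k r).filter fun c => ¬ posn T k r c < bnum T k r).card := by
      rw [rowFree, Finset.filter_filter]
    have h1 := card_assigned_high T k r
    have h2 : ((Finset.range (lam.rowLen r)).filter fun c => FLow T k r c).card
        = anum T k r := rfl
    convert (h0.trans h1).trans h2.symm using 2 <;> congr
  show ((skewCells lam mu).filter fun p => BKe T k p.1 p.2 = k + 1).card
      = ((skewCells lam mu).filter fun p => T.entry p.1 p.2 = k).card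
  rw [hL, hR, Finset.card_union_of_disjoint hdL, Finset.card_union_of_disjoint hdR,
    ← card_fixed_eq, hfiber]

lemma BK_le (n : ℕ) (hkn : k + 1 ≤ n) (hT : ∀ r c, (r, c) ∈ skewCells lam mu → T.entry r c ≤ n)
    (r c : ℕ) (hm : (r, c) ∈ skewCells lam mu) : BKe T k r c ≤ n := by
  by_cases hf : FLow T k r c ∨ FHigh T k r c
  · rcases BKe_mem_of_free T k hf with h | h <;> omega
  · rw [BKe_of_not_free T k hf]
    exact hT r c hm

end BK

namespace BK

variable {lam mu : YoungDiagram}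

lemma card_content_adjacent {n : ℕ} (α : Fin n → ℕ) (i : ℕ) (hi : i + 1 < n) :
    Nat.card ↥(SSYTcontent lam mu α) = Nat.card ↥(SSYTcontent lam mu
      (α ∘ Equiv.swap (⟨i, by omega⟩ : Fin n) (⟨i + 1, hi⟩ : Fin n))) := by
  set a : Fin n := ⟨i, by omega⟩ with ha
  set b : Fin n := ⟨i + 1, hi⟩ with hb
  have hk : 0 < i + 1 := by omega
  have main : ∀ (β : Fin n → ℕ) (T : SkewSSYT lam mu),
      (∀ j : Fin n, T.wt ((j : ℕ) + 1) = β j) →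
      ∀ j : Fin n, (BKT T (i + 1) hk).wt ((j : ℕ) + 1) = (β ∘ Equiv.swap a b) j := by
    intro β T hT j
    rcases eq_or_ne j a with rfl | hja
    · show (BKT T (i + 1) hk).wt (i + 1) = (β ∘ ⇑(Equiv.swap a b)) a
      rw [wt_BK_low T (i + 1) hk]
      simp only [Function.comp_apply, Equiv.swap_apply_left]
      exact hT b
    · rcases eq_or_ne j b with rfl | hjb
      · show (BKT T (i + 1) hk).wt ((i + 1) + 1) = (β ∘ ⇑(Equiv.swap a b)) b
        rw [wt_BK_high T (i + 1) hk]
        simp only [Function.comp_apply, Equiv.swap_apply_right]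
        exact hT a
      · have hne1 : (j : ℕ) + 1 ≠ i + 1 := by
          intro h
          exact hja (Fin.ext (show (j : ℕ) = i by omega))
        have hne2 : (j : ℕ) + 1 ≠ (i + 1) + 1 := by
          intro h
          exact hjb (Fin.ext (show (j : ℕ) = i + 1 by omega))
        rw [wt_BK_other T (i + 1) hk _ hne1 hne2]
        simp only [Function.comp_apply, Equiv.swap_apply_of_ne_of_ne hja hjb]
        exact hT j
  have bdd : ∀ (T : SkewSSYT lam mu),
      (∀ r c, (r, c) ∈ skewCells lam mu → T.entry r c ≤ n) →
      ∀ r c, (r, c) ∈ skewCells lam mu → (BKT T (i + 1) hk).entry r c ≤ n := by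
    intro T hT r c hm
    exact BK_le T (i + 1) n (by omega) hT r c hm
  apply Nat.card_congr
  refine ⟨fun T => ⟨BKT T.1 (i + 1) hk, ?_⟩, fun T => ⟨BKT T.1 (i + 1) hk, ?_⟩, ?_, ?_⟩
  · obtain ⟨hw, hbd⟩ := T.2
    exact ⟨main α T.1 hw, bdd T.1 hbd⟩
  · obtain ⟨hw, hbd⟩ := T.2
    refine ⟨?_, bdd T.1 hbd⟩
    intro j
    rw [main (α ∘ Equiv.swap a b) T.1 hw j]
    simp only [Function.comp_apply]
    rw [Equiv.swap_apply_self]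
  · intro T
    apply Subtype.ext
    exact BK_BK T.1 (i + 1) hk
  · intro T
    apply Subtype.ext
    exact BK_BK T.1 (i + 1) hk

lemma card_content_adj {n : ℕ} (a b : Fin n) (hab : (b : ℕ) = (a : ℕ) + 1)
    (α : Fin n → ℕ) : Nat.card ↥(SSYTcontent lam mu α)
      = Nat.card ↥(SSYTcontent lam mu (α ∘ Equiv.swap a b)) := by
  have ha : (a : ℕ) + 1 < n := by have := b.isLt; omega
  have hbe : b = (⟨(a : ℕ) + 1, ha⟩ : Fin n) := Fin.ext hab
  subst hbe
  exact card_content_adjacent α (a : ℕ) ha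

lemma card_content_swap_dist {n : ℕ} : ∀ (d : ℕ) (a b : Fin n),
    (b : ℕ) = (a : ℕ) + d + 1 → ∀ α : Fin n → ℕ,
    Nat.card ↥(SSYTcontent lam mu α)
      = Nat.card ↥(SSYTcontent lam mu (α ∘ Equiv.swap a b)) := by
  intro d
  induction d with
  | zero => exact fun a b hab α => card_content_adj a b (by omega) α
  | succ d ih =>
    intro a b hab α
    have hmlt : (a : ℕ) + d + 1 < n := by have := b.isLt; omega
    set m : Fin n := ⟨(a : ℕ) + d + 1, hmlt⟩ with hm
    have hmv : (m : ℕ) = (a : ℕ) + d + 1 := rfl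
    have hmb : (b : ℕ) = (m : ℕ) + 1 := by omega
    have key : Equiv.swap m b * Equiv.swap a m * Equiv.swap m b = Equiv.swap a b := by
      have h1 : a ≠ m := by
        intro h
        have : (a : ℕ) = (m : ℕ) := congrArg Fin.val h
        omega
      have h2 : a ≠ b := by
        intro h
        have : (a : ℕ) = (b : ℕ) := congrArg Fin.val h
        omega
      rw [Equiv.swap_mul_swap_mul_swap h1 h2, Equiv.swap_comm]
    have hfun : ((α ∘ Equiv.swap m b) ∘ Equiv.swap a m) ∘ Equiv.swap m b
        = α ∘ Equiv.swap a b := by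
      rw [← key]
      funext x
      simp [Equiv.Perm.mul_apply, Function.comp]
    calc Nat.card ↥(SSYTcontent lam mu α)
        = Nat.card ↥(SSYTcontent lam mu (α ∘ Equiv.swap m b)) :=
          card_content_adj m b hmb α
      _ = Nat.card ↥(SSYTcontent lam mu ((α ∘ Equiv.swap m b) ∘ Equiv.swap a m)) :=
          ih a m hmv _
      _ = Nat.card ↥(SSYTcontent lam mu (((α ∘ Equiv.swap m b) ∘ Equiv.swap a m)
            ∘ Equiv.swap m b)) := card_content_adj m b hmb _
      _ = Nat.card ↥(SSYTcontent lam mu (α ∘ Equiv.swap a b)) := by rw [hfun]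

lemma card_content_swap {n : ℕ} (a b : Fin n) (α : Fin n → ℕ) :
    Nat.card ↥(SSYTcontent lam mu α)
      = Nat.card ↥(SSYTcontent lam mu (α ∘ Equiv.swap a b)) := by
  rcases lt_trichotomy (a : ℕ) (b : ℕ) with h | h | h
  · exact card_content_swap_dist ((b : ℕ) - (a : ℕ) - 1) a b (by omega) α
  · have : a = b := Fin.ext h
    subst this
    rw [Equiv.swap_self]
    congr 1
  · rw [Equiv.swap_comm]
    exact card_content_swap_dist ((a : ℕ) - (b : ℕ) - 1) b a (by omega) α

lemma card_content_perm {n : ℕ} (σ : Equiv.Perm (Fin n)) (α : Fin n → ℕ) :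
    Nat.card ↥(SSYTcontent lam mu α)
      = Nat.card ↥(SSYTcontent lam mu (α ∘ σ)) := by
  revert α
  refine Equiv.Perm.swap_induction_on σ ?_ ?_
  · intro α
    rw [show α ∘ ⇑(1 : Equiv.Perm (Fin n)) = α from funext fun x => rfl]
  · intro f x y hxy ihf α
    have hcomp : α ∘ ⇑(Equiv.swap x y * f) = (α ∘ Equiv.swap x y) ∘ f := by
      funext t
      simp [Equiv.Perm.mul_apply, Function.comp]
    rw [hcomp, ← ihf (α ∘ Equiv.swap x y)]
    exact card_content_swap x y α

end BK

/-- The number of semistandard skew tableaux of shape `λ/μ` with content `α` depends only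
on the multiset of entries of `α`: permuting the content does not change the count. -/
theorem card_ssytContent_perm_invariant (lam mu : YoungDiagram) (hsub : mu ≤ lam)
    (n : ℕ) (hn : 0 < n) (α β : Fin n → ℕ) (hα : ∑ i, α i = lam.card - mu.card)
    (hβ : ∑ i, β i = lam.card - mu.card) (σ : Equiv.Perm (Fin n)) (hperm : β = α ∘ σ) :
    Nat.card ↥(SSYTcontent lam mu α) = Nat.card ↥(SSYTcontent lam mu β) := by
  subst hperm
  exact BK.card_content_perm σ α
end

section
/- Let λ/μ be a skew shape, n a positive integer with gcd(|λ/μ|, n) = 1, and α a weak composition of |λ/μ| into n parts. Let X be the disjoint union X = ⋃_{r=1}^n SSYT(λ/μ, cyc_r(α)) and let f(q) = Σ_{T ∈ X} q^{Σ_{j=1}^n j·w_j(T)}. Then for every primitive n-th root of unity ξ ∈ ℂ and every integer k not divisible by n, f(ξ^k) = 0, and f(1) = |X| = n·|SSYT(λ/μ, α)|. -/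
open Finset Polynomial

section Aux

variable {lam mu : YoungDiagram}

@[ext] lemma SkewSSYT.ext {T U : SkewSSYT lam mu} (h : T.entry = U.entry) : T = U := by
  cases T; cases U; simpa using h

lemma mem_skew_iff {r c : ℕ} :
    (r, c) ∈ skewCells lam mu ↔ (r, c) ∈ lam ∧ (r, c) ∉ mu := by
  simp [skewCells, Finset.mem_sdiff, YoungDiagram.mem_cells]

lemma skew_SE {r c : ℕ} (h1 : (r, c) ∈ skewCells lam mu)
    (h2 : (r + 1, c + 1) ∈ skewCells lam mu) : (r + 1, c) ∈ skewCells lam mu := by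
  rw [mem_skew_iff] at *
  refine ⟨lam.up_left_mem le_rfl (Nat.le_succ c) h2.1, fun hm => h1.2 ?_⟩
  exact mu.up_left_mem (Nat.le_succ r) le_rfl hm

lemma skew_NE {r c : ℕ} (h1 : (r + 1, c + 1) ∈ skewCells lam mu)
    (h2 : (r, c) ∈ skewCells lam mu) : (r, c + 1) ∈ skewCells lam mu := by
  rw [mem_skew_iff] at *
  refine ⟨lam.up_left_mem (Nat.le_succ r) le_rfl h1.1, fun hm => h2.2 ?_⟩
  exact mu.up_left_mem le_rfl (Nat.le_succ c) hm

lemma skew_col_interval {r1 r r2 c : ℕ} (h1 : (r1, c) ∈ skewCells lam mu)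
    (h2 : (r2, c) ∈ skewCells lam mu) (ha : r1 ≤ r) (hb : r ≤ r2) :
    (r, c) ∈ skewCells lam mu := by
  rw [mem_skew_iff] at *
  exact ⟨lam.up_left_mem hb le_rfl h2.1, fun hm => h1.2 (mu.up_left_mem ha le_rfl hm)⟩

lemma skew_row_interval {r c1 c c2 : ℕ} (h1 : (r, c1) ∈ skewCells lam mu)
    (h2 : (r, c2) ∈ skewCells lam mu) (ha : c1 ≤ c) (hb : c ≤ c2) :
    (r, c) ∈ skewCells lam mu := by
  rw [mem_skew_iff] at *
  exact ⟨lam.up_left_mem le_rfl hb h2.1, fun hm => h1.2 (mu.up_left_mem le_rfl ha hm)⟩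

lemma row_weak_of_adj (e : ℕ → ℕ → ℕ)
    (h : ∀ r c, (r, c) ∈ skewCells lam mu → (r, c + 1) ∈ skewCells lam mu →
      e r c ≤ e r (c + 1)) :
    ∀ r c1 c2, c1 < c2 → (r, c1) ∈ skewCells lam mu → (r, c2) ∈ skewCells lam mu →
      e r c1 ≤ e r c2 := by
  have key : ∀ d r c1, (r, c1) ∈ skewCells lam mu → (r, c1 + d + 1) ∈ skewCells lam mu →
      e r c1 ≤ e r (c1 + d + 1) := by
    intro d
    induction d with
    | zero => exact fun r c1 h1 h2 => h r c1 h1 h2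
    | succ d ih =>
      intro r c1 h1 h2
      have hmid : (r, c1 + d + 1) ∈ skewCells lam mu :=
        skew_row_interval h1 h2 (by omega) (by omega)
      exact (ih r c1 h1 hmid).trans (h r (c1 + d + 1) hmid h2)
  intro r c1 c2 hlt h1 h2
  obtain ⟨d, rfl⟩ : ∃ d, c2 = c1 + d + 1 := ⟨c2 - c1 - 1, by omega⟩
  exact key d r c1 h1 h2

lemma col_strict_of_adj (e : ℕ → ℕ → ℕ)
    (h : ∀ r c, (r, c) ∈ skewCells lam mu → (r + 1, c) ∈ skewCells lam mu →
      e r c < e (r + 1) c) :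
    ∀ r1 r2 c, r1 < r2 → (r1, c) ∈ skewCells lam mu → (r2, c) ∈ skewCells lam mu →
      e r1 c < e r2 c := by
  have key : ∀ d r1 c, (r1, c) ∈ skewCells lam mu → (r1 + d + 1, c) ∈ skewCells lam mu →
      e r1 c < e (r1 + d + 1) c := by
    intro d
    induction d with
    | zero => exact fun r1 c h1 h2 => h r1 c h1 h2
    | succ d ih =>
      intro r1 c h1 h2
      have hmid : (r1 + d + 1, c) ∈ skewCells lam mu :=
        skew_col_interval h1 h2 (by omega) (by omega)
      exact (ih r1 c h1 hmid).trans (h (r1 + d + 1) c hmid h2)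
  intro r1 r2 c hlt h1 h2
  obtain ⟨d, rfl⟩ : ∃ d, r2 = r1 + d + 1 := ⟨r2 - r1 - 1, by omega⟩
  exact key d r1 c h1 h2

end Aux


section CFilter

/-- `Finset.filter` with a fixed classical decidability instance, to avoid
instance mismatches. -/
noncomputable def cfilter {α : Type*} (q : α → Prop) (s : Finset α) : Finset α :=
  @Finset.filter α q (fun a => Classical.propDecidable (q a)) s

@[simp] lemma mem_cfilter {α : Type*} {q : α → Prop} {s : Finset α} {a : α} :
    a ∈ cfilter q s ↔ a ∈ s ∧ q a :=
  @Finset.mem_filter α q (fun a => Classical.propDecidable (q a)) s a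

lemma cfilter_subset {α : Type*} (q : α → Prop) (s : Finset α) : cfilter q s ⊆ s :=
  @Finset.filter_subset α q (fun a => Classical.propDecidable (q a)) s

lemma cfilter_card_le {α : Type*} (q : α → Prop) (s : Finset α) :
    (cfilter q s).card ≤ s.card := Finset.card_le_card (cfilter_subset q s)

lemma cfilter_card_add_neg {α : Type*} (q : α → Prop) (s : Finset α) :
    (cfilter q s).card + (cfilter (fun a => ¬ q a) s).card = s.card := by
  classical
  have hs : cfilter (fun a => ¬ q a) s = s \ cfilter q s := by
    ext a
    simp only [mem_cfilter, Finset.mem_sdiff]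
    tauto
  rw [hs, Finset.card_sdiff_of_subset (cfilter_subset q s)]
  have := cfilter_card_le q s
  omega

end CFilter

section Counting

lemma filter_cntLe_card (N : ℕ) : ∀ (F : Finset ℕ) (b : ℕ), F.card = N → b ≤ N →
    (cfilter (fun c => (cfilter (fun c' => c' ≤ c) F).card ≤ b) F).card = b := by
  induction N with
  | zero =>
    intro F b hF hb
    interval_cases b
    have h0 := cfilter_card_le (fun c => (cfilter (fun c' => c' ≤ c) F).card ≤ 0) F
    omega
  | succ N ih =>
    intro F b hF hb
    have hne : F.Nonempty := Finset.card_pos.mp (by omega)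
    rcases eq_or_lt_of_le hb with hb' | hb'
    · subst hb'
      have : (cfilter (fun c => (cfilter (fun c' => c' ≤ c) F).card ≤ N + 1) F) = F := by
        ext c
        simp only [mem_cfilter, and_iff_left_iff_imp]
        intro _
        calc (cfilter (fun c' => c' ≤ c) F).card ≤ F.card := cfilter_card_le _ _
        _ = N + 1 := hF
      rw [this, hF]
    · set M := F.max' hne with hM
      have hMF : M ∈ F := F.max'_mem hne
      have hcnt : ∀ c ∈ F.erase M, (cfilter (fun c' => c' ≤ c) F).card
          = (cfilter (fun c' => c' ≤ c) (F.erase M)).card := by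
        intro c hc
        congr 1
        ext x
        simp only [mem_cfilter, Finset.mem_erase]
        constructor
        · rintro ⟨hx, hxc⟩
          refine ⟨⟨fun hxM => ?_, hx⟩, hxc⟩
          subst hxM
          have hcM : c ≤ M := F.le_max' c (Finset.mem_of_mem_erase hc)
          exact (Finset.mem_erase.mp hc).1 (le_antisymm hcM hxc)
        · rintro ⟨⟨_, hx⟩, hxc⟩; exact ⟨hx, hxc⟩
      have hMnot : ¬ ((cfilter (fun c' => c' ≤ M) F).card ≤ b) := by
        have : (cfilter (fun c' => c' ≤ M) F) = F := by
          ext x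
          simp only [mem_cfilter, and_iff_left_iff_imp]
          exact fun hx => F.le_max' x hx
        rw [this, hF]; omega
      have hset : (cfilter (fun c => (cfilter (fun c' => c' ≤ c) F).card ≤ b) F)
          = (cfilter (fun c =>
              (cfilter (fun c' => c' ≤ c) (F.erase M)).card ≤ b) (F.erase M)) := by
        ext c
        simp only [mem_cfilter, Finset.mem_erase]
        constructor
        · rintro ⟨hc, hcb⟩
          have hcM : c ≠ M := by rintro rfl; exact hMnot hcb
          have hce : c ∈ F.erase M := Finset.mem_erase.mpr ⟨hcM, hc⟩
          exact ⟨⟨hcM, hc⟩, by rw [← hcnt c hce]; exact hcb⟩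
        · rintro ⟨⟨hcM, hc⟩, hcb⟩
          have hce : c ∈ F.erase M := Finset.mem_erase.mpr ⟨hcM, hc⟩
          exact ⟨hc, by rw [hcnt c hce]; exact hcb⟩
      rw [hset]
      exact ih (F.erase M) b (by rw [Finset.card_erase_of_mem hMF, hF]; omega) (by omega)

lemma cnt_le_iff_mem (A B : Finset ℕ) (hd : Disjoint A B)
    (hlt : ∀ a ∈ A, ∀ b ∈ B, a < b) (c : ℕ) (hc : c ∈ A ∪ B) :
    ((cfilter (fun c' => c' ≤ c) (A ∪ B)).card ≤ A.card) ↔ c ∈ A := by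
  rcases Finset.mem_union.mp hc with hcA | hcB
  · simp only [hcA, iff_true]
    apply Finset.card_le_card
    intro x hx
    rcases mem_cfilter.mp hx with ⟨hxu, hxc⟩
    rcases Finset.mem_union.mp hxu with h | h
    · exact h
    · exact absurd (hlt c hcA x h) (by omega)
  · have hcA : c ∉ A := fun h => (Finset.disjoint_left.mp hd h) hcB
    simp only [hcA, iff_false, not_le]
    have hsub : insert c A ⊆ cfilter (fun c' => c' ≤ c) (A ∪ B) := by
      intro x hx
      rcases Finset.mem_insert.mp hx with rfl | hxA
      · exact mem_cfilter.mpr ⟨hc, le_rfl⟩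
      · exact mem_cfilter.mpr ⟨Finset.mem_union_left _ hxA, le_of_lt (hlt x hxA c hcB)⟩
    calc A.card < (insert c A).card := by rw [Finset.card_insert_of_notMem hcA]; omega
    _ ≤ _ := Finset.card_le_card hsub

end Counting

section BK

variable (lam mu : YoungDiagram)

/-- An `i` with an `i+1` directly below it. -/
def fixedLow (e : ℕ → ℕ → ℕ) (v r c : ℕ) : Prop :=
  e r c = v ∧ (r + 1, c) ∈ skewCells lam mu ∧ e (r + 1) c = v + 1

/-- An `i+1` with an `i` directly above it. -/
def fixedHigh (e : ℕ → ℕ → ℕ) (v r c : ℕ) : Prop :=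
  e r c = v + 1 ∧ ∃ r', r = r' + 1 ∧ (r', c) ∈ skewCells lam mu ∧ e r' c = v

/-- A free cell: entry `v` or `v+1`, not vertically paired. -/
def isFree (e : ℕ → ℕ → ℕ) (v r c : ℕ) : Prop :=
  (r, c) ∈ skewCells lam mu ∧
    ((e r c = v ∧ ¬ fixedLow lam mu e v r c) ∨
      (e r c = v + 1 ∧ ¬ fixedHigh lam mu e v r c))

/-- Columns of the free cells in row `r`. -/
noncomputable def freeRow (e : ℕ → ℕ → ℕ) (v r : ℕ) : Finset ℕ :=
  cfilter (fun c => isFree lam mu e v r c)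
    ((cfilter (fun p => p.1 = r) (skewCells lam mu)).image Prod.snd)

noncomputable def bcount (e : ℕ → ℕ → ℕ) (v r : ℕ) : ℕ :=
  (cfilter (fun c => e r c = v + 1) (freeRow lam mu e v r)).card

noncomputable def cntLe (e : ℕ → ℕ → ℕ) (v r c : ℕ) : ℕ :=
  (cfilter (fun c' => c' ≤ c) (freeRow lam mu e v r)).card

open Classical in
/-- The Bender–Knuth involution on entries. -/
noncomputable def bkEntry (e : ℕ → ℕ → ℕ) (v : ℕ) : ℕ → ℕ → ℕ := fun r c =>
  if isFree lam mu e v r c then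
    (if cntLe lam mu e v r c ≤ bcount lam mu e v r then v else v + 1)
  else e r c

variable {lam mu}

lemma isFree.mem {e v r c} (h : isFree lam mu e v r c) : (r, c) ∈ skewCells lam mu := h.1

lemma isFree.val {e v r c} (h : isFree lam mu e v r c) : e r c = v ∨ e r c = v + 1 := by
  rcases h.2 with ⟨h, _⟩ | ⟨h, _⟩
  · exact Or.inl h
  · exact Or.inr h

lemma isFree.not_fixedLow {e v r c} (h : isFree lam mu e v r c) (he : e r c = v) :
    ¬ fixedLow lam mu e v r c := by
  rcases h.2 with ⟨_, hf⟩ | ⟨h2, _⟩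
  · exact hf
  · omega

lemma isFree.not_fixedHigh {e v r c} (h : isFree lam mu e v r c) (he : e r c = v + 1) :
    ¬ fixedHigh lam mu e v r c := by
  rcases h.2 with ⟨h2, _⟩ | ⟨_, hf⟩
  · omega
  · exact hf

lemma fixedLow_of_not_free {e v r c} (hm : (r, c) ∈ skewCells lam mu)
    (he : e r c = v) (h : ¬ isFree lam mu e v r c) : fixedLow lam mu e v r c := by
  by_contra hf
  exact h ⟨hm, Or.inl ⟨he, hf⟩⟩

lemma fixedHigh_of_not_free {e v r c} (hm : (r, c) ∈ skewCells lam mu)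
    (he : e r c = v + 1) (h : ¬ isFree lam mu e v r c) : fixedHigh lam mu e v r c := by
  by_contra hf
  exact h ⟨hm, Or.inr ⟨he, hf⟩⟩

lemma fixedLow.not_free {e v r c} (h : fixedLow lam mu e v r c) :
    ¬ isFree lam mu e v r c := fun hf => hf.not_fixedLow h.1 h

lemma fixedHigh.not_free {e v r c} (h : fixedHigh lam mu e v r c) :
    ¬ isFree lam mu e v r c := fun hf => hf.not_fixedHigh h.1 h

lemma mem_freeRow {e v r c} : c ∈ freeRow lam mu e v r ↔ isFree lam mu e v r c := by
  simp only [freeRow, mem_cfilter, Finset.mem_image]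
  constructor
  · rintro ⟨_, h⟩; exact h
  · intro h
    exact ⟨⟨(r, c), ⟨h.mem, rfl⟩, rfl⟩, h⟩

lemma bkEntry_of_not_free {e : ℕ → ℕ → ℕ} {v r c : ℕ} (h : ¬ isFree lam mu e v r c) :
    bkEntry lam mu e v r c = e r c := by
  unfold bkEntry; rw [if_neg h]

lemma bkEntry_of_free {e : ℕ → ℕ → ℕ} {v r c : ℕ} (h : isFree lam mu e v r c) :
    bkEntry lam mu e v r c
      = if cntLe lam mu e v r c ≤ bcount lam mu e v r then v else v + 1 := by
  unfold bkEntry; rw [if_pos h]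

lemma bk_ge {e : ℕ → ℕ → ℕ} {v r c : ℕ} (h : isFree lam mu e v r c) :
    v ≤ bkEntry lam mu e v r c := by
  rw [bkEntry_of_free h]; split_ifs <;> omega

lemma bk_le {e : ℕ → ℕ → ℕ} {v r c : ℕ} (h : isFree lam mu e v r c) :
    bkEntry lam mu e v r c ≤ v + 1 := by
  rw [bkEntry_of_free h]; split_ifs <;> omega

/-- Bender–Knuth: a fixed low to the right of a low pushes fixedness left. -/
lemma fixedLow_left (T : SkewSSYT lam mu) (v : ℕ) {r c : ℕ}
    (h1 : (r, c) ∈ skewCells lam mu) (h2 : (r, c + 1) ∈ skewCells lam mu)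
    (ha : T.entry r c = v) (hf : fixedLow lam mu T.entry v r (c + 1)) :
    fixedLow lam mu T.entry v r c := by
  obtain ⟨_, hmem, hval⟩ := hf
  have hm : (r + 1, c) ∈ skewCells lam mu := skew_SE h1 hmem
  have h5 : T.entry (r + 1) c ≤ T.entry (r + 1) (c + 1) :=
    T.row_weak' _ _ _ (lt_add_one c) hm hmem
  have h6 : T.entry r c < T.entry (r + 1) c := T.col_strict' _ _ _ (lt_add_one r) h1 hm
  exact ⟨ha, hm, by omega⟩

lemma fixedHigh_right (T : SkewSSYT lam mu) (v : ℕ) {r c : ℕ}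
    (h2 : (r, c + 1) ∈ skewCells lam mu)
    (hb : T.entry r (c + 1) = v + 1) (hf : fixedHigh lam mu T.entry v r c) :
    fixedHigh lam mu T.entry v r (c + 1) := by
  obtain ⟨_, r', rfl, hmem, hval⟩ := hf
  have hm : (r', c + 1) ∈ skewCells lam mu := skew_NE h2 hmem
  have h5 : T.entry r' c ≤ T.entry r' (c + 1) := T.row_weak' _ _ _ (lt_add_one c) hmem hm
  have h6 : T.entry r' (c + 1) < T.entry (r' + 1) (c + 1) :=
    T.col_strict' _ _ _ (lt_add_one r') hm h2
  exact ⟨hb, r', rfl, hm, by omega⟩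

lemma bk_row_adj (T : SkewSSYT lam mu) (v : ℕ) {r c : ℕ}
    (h1 : (r, c) ∈ skewCells lam mu) (h2 : (r, c + 1) ∈ skewCells lam mu) :
    bkEntry lam mu T.entry v r c ≤ bkEntry lam mu T.entry v r (c + 1) := by
  have hee : T.entry r c ≤ T.entry r (c + 1) := T.row_weak' _ _ _ (lt_add_one c) h1 h2
  by_cases hx : isFree lam mu T.entry v r c <;>
    by_cases hy : isFree lam mu T.entry v r (c + 1)
  · rw [bkEntry_of_free hx, bkEntry_of_free hy]
    have hcnt : cntLe lam mu T.entry v r c ≤ cntLe lam mu T.entry v r (c + 1) := by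
      apply Finset.card_le_card
      intro x hx'
      simp only [mem_cfilter] at *
      exact ⟨hx'.1, by omega⟩
    split_ifs <;> omega
  · rw [bkEntry_of_not_free hy]
    have hb1 := hx.val
    by_cases h2v : T.entry r (c + 1) = v
    · have he1 : T.entry r c = v := by omega
      have hfy : fixedLow lam mu T.entry v r (c + 1) := fixedLow_of_not_free h2 h2v hy
      exact absurd (fixedLow_left T v h1 h2 he1 hfy) (hx.not_fixedLow he1)
    · have := bk_le hx
      by_cases h3 : T.entry r (c + 1) = v + 1 <;> omega
  · rw [bkEntry_of_not_free hx]
    have hb2 := hy.val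
    have hge := bk_ge hy
    by_cases h1v : T.entry r c = v + 1
    · have hfx : fixedHigh lam mu T.entry v r c := fixedHigh_of_not_free h1 h1v hx
      have h2v1 : T.entry r (c + 1) = v + 1 := by omega
      exact absurd (fixedHigh_right T v h2 h2v1 hfx) (hy.not_fixedHigh h2v1)
    · by_cases h1v' : T.entry r c = v <;> omega
  · rw [bkEntry_of_not_free hx, bkEntry_of_not_free hy]; exact hee

lemma bk_col_adj (T : SkewSSYT lam mu) (v : ℕ) {r c : ℕ}
    (h1 : (r, c) ∈ skewCells lam mu) (h2 : (r + 1, c) ∈ skewCells lam mu) :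
    bkEntry lam mu T.entry v r c < bkEntry lam mu T.entry v (r + 1) c := by
  have hee : T.entry r c < T.entry (r + 1) c := T.col_strict' _ _ _ (lt_add_one r) h1 h2
  by_cases hx : isFree lam mu T.entry v r c
  · have he2 : v + 2 ≤ T.entry (r + 1) c := by
      rcases hx.val with he1 | he1
      · by_contra hcon
        have hval : T.entry (r + 1) c = v + 1 := by omega
        exact hx.not_fixedLow he1 ⟨he1, h2, hval⟩
      · omega
    have hy : ¬ isFree lam mu T.entry v (r + 1) c := by
      intro h
      rcases h.val with h' | h' <;> omega
    rw [bkEntry_of_not_free hy]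
    have := bk_le hx
    omega
  · by_cases hy : isFree lam mu T.entry v (r + 1) c
    · rw [bkEntry_of_not_free hx]
      have hge := bk_ge hy
      rcases hy.val with he2 | he2
      · omega
      · have hne : T.entry r c ≠ v := by
          intro hval
          exact hy.not_fixedHigh he2 ⟨he2, r, rfl, h1, hval⟩
        omega
    · rw [bkEntry_of_not_free hx, bkEntry_of_not_free hy]; exact hee

/-- The Bender–Knuth involution as a map on skew SSYT. -/
noncomputable def bkT (T : SkewSSYT lam mu) (v : ℕ) (hv : 1 ≤ v) : SkewSSYT lam mu where
  entry := bkEntry lam mu T.entry v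
  pos' := by
    intro r c hm
    by_cases hx : isFree lam mu T.entry v r c
    · have := bk_ge hx; omega
    · rw [bkEntry_of_not_free hx]; exact T.pos' r c hm
  zeros' := by
    intro r c hm
    have hx : ¬ isFree lam mu T.entry v r c := fun h => hm h.mem
    rw [bkEntry_of_not_free hx]
    exact T.zeros' r c hm
  row_weak' := row_weak_of_adj _ fun r c ha hb => bk_row_adj T v ha hb
  col_strict' := col_strict_of_adj _ fun r c ha hb => bk_col_adj T v ha hb

lemma bkT_entry (T : SkewSSYT lam mu) (v : ℕ) (hv : 1 ≤ v) :
    (bkT T v hv).entry = bkEntry lam mu T.entry v := rfl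

end BK
section Weights

variable {lam mu : YoungDiagram}

lemma wt_eq (T : SkewSSYT lam mu) (k : ℕ) :
    T.wt k = (cfilter (fun p : ℕ × ℕ => T.entry p.1 p.2 = k) (skewCells lam mu)).card := by
  unfold SkewSSYT.wt
  congr 1
  ext p
  simp [mem_cfilter]

lemma card_free_filter (e : ℕ → ℕ → ℕ) (v : ℕ) (q : ℕ → ℕ → Prop) :
    (cfilter (fun p : ℕ × ℕ => isFree lam mu e v p.1 p.2 ∧ q p.1 p.2)
        (skewCells lam mu)).card
      = ∑ r ∈ (skewCells lam mu).image Prod.fst,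
          (cfilter (fun c => q r c) (freeRow lam mu e v r)).card := by
  classical
  rw [Finset.card_eq_sum_card_fiberwise
    (f := Prod.fst) (t := (skewCells lam mu).image Prod.fst)
    (fun p hp => Finset.mem_image_of_mem _ (mem_cfilter.mp hp).1)]
  apply Finset.sum_congr rfl
  intro r _
  apply Finset.card_bij (fun p _ => p.2)
  · rintro ⟨r', c⟩ hp
    simp only [Finset.mem_filter, mem_cfilter] at hp
    obtain ⟨⟨hmem, hfree, hq⟩, hr⟩ := hp
    subst hr
    exact mem_cfilter.mpr ⟨mem_freeRow.mpr hfree, hq⟩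
  · rintro ⟨r1, c1⟩ h1 ⟨r2, c2⟩ h2 hc
    simp only [Finset.mem_filter] at h1 h2
    simp_all
  · intro c hc
    obtain ⟨hcF, hq⟩ := mem_cfilter.mp hc
    have hfree := mem_freeRow.mp hcF
    exact ⟨(r, c), Finset.mem_filter.mpr ⟨mem_cfilter.mpr ⟨hfree.mem, hfree, hq⟩, rfl⟩, rfl⟩

lemma card_fixedLow_eq_fixedHigh (e : ℕ → ℕ → ℕ) (v : ℕ) :
    (cfilter (fun p : ℕ × ℕ => fixedLow lam mu e v p.1 p.2) (skewCells lam mu)).card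
      = (cfilter (fun p : ℕ × ℕ => fixedHigh lam mu e v p.1 p.2)
          (skewCells lam mu)).card := by
  apply Finset.card_bij (fun p _ => (p.1 + 1, p.2))
  · rintro ⟨r, c⟩ hp
    obtain ⟨hmem, hval, hm2, hval2⟩ := mem_cfilter.mp hp
    exact mem_cfilter.mpr ⟨hm2, hval2, r, rfl, hmem, hval⟩
  · rintro ⟨r1, c1⟩ h1 ⟨r2, c2⟩ h2 hc
    simp_all
  · rintro ⟨r, c⟩ hq
    obtain ⟨hmem, hval, r', hr, hm2, hval2⟩ := mem_cfilter.mp hq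
    subst hr
    exact ⟨(r', c), mem_cfilter.mpr ⟨hm2, hval2, hmem, hval⟩, rfl⟩

lemma bk_filter_v (e : ℕ → ℕ → ℕ) (v : ℕ) :
    cfilter (fun p : ℕ × ℕ => bkEntry lam mu e v p.1 p.2 = v) (skewCells lam mu)
      = cfilter (fun p : ℕ × ℕ => fixedLow lam mu e v p.1 p.2) (skewCells lam mu)
        ∪ cfilter (fun p : ℕ × ℕ => isFree lam mu e v p.1 p.2 ∧
            cntLe lam mu e v p.1 p.2 ≤ bcount lam mu e v p.1) (skewCells lam mu) := by
  classical
  ext ⟨r, c⟩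
  simp only [Finset.mem_union, mem_cfilter]
  constructor
  · rintro ⟨hmem, hbk⟩
    by_cases hfree : isFree lam mu e v r c
    · rw [bkEntry_of_free hfree] at hbk
      right
      refine ⟨hmem, hfree, ?_⟩
      by_contra hc
      rw [if_neg hc] at hbk
      omega
    · rw [bkEntry_of_not_free hfree] at hbk
      exact Or.inl ⟨hmem, fixedLow_of_not_free hmem hbk hfree⟩
  · rintro (⟨hmem, hf⟩ | ⟨hmem, hfree, hcnt⟩)
    · exact ⟨hmem, by rw [bkEntry_of_not_free hf.not_free]; exact hf.1⟩
    · exact ⟨hmem, by rw [bkEntry_of_free hfree, if_pos hcnt]⟩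

lemma bk_filter_v1 (e : ℕ → ℕ → ℕ) (v : ℕ) :
    cfilter (fun p : ℕ × ℕ => bkEntry lam mu e v p.1 p.2 = v + 1) (skewCells lam mu)
      = cfilter (fun p : ℕ × ℕ => fixedHigh lam mu e v p.1 p.2) (skewCells lam mu)
        ∪ cfilter (fun p : ℕ × ℕ => isFree lam mu e v p.1 p.2 ∧
            ¬ (cntLe lam mu e v p.1 p.2 ≤ bcount lam mu e v p.1)) (skewCells lam mu) := by
  classical
  ext ⟨r, c⟩
  simp only [Finset.mem_union, mem_cfilter]
  constructor
  · rintro ⟨hmem, hbk⟩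
    by_cases hfree : isFree lam mu e v r c
    · rw [bkEntry_of_free hfree] at hbk
      right
      refine ⟨hmem, hfree, ?_⟩
      intro hc
      rw [if_pos hc] at hbk
      omega
    · rw [bkEntry_of_not_free hfree] at hbk
      exact Or.inl ⟨hmem, fixedHigh_of_not_free hmem hbk hfree⟩
  · rintro (⟨hmem, hf⟩ | ⟨hmem, hfree, hcnt⟩)
    · exact ⟨hmem, by rw [bkEntry_of_not_free hf.not_free]; exact hf.1⟩
    · exact ⟨hmem, by rw [bkEntry_of_free hfree, if_neg hcnt]⟩

lemma old_filter_v1 (e : ℕ → ℕ → ℕ) (v : ℕ) :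
    cfilter (fun p : ℕ × ℕ => e p.1 p.2 = v + 1) (skewCells lam mu)
      = cfilter (fun p : ℕ × ℕ => fixedHigh lam mu e v p.1 p.2) (skewCells lam mu)
        ∪ cfilter (fun p : ℕ × ℕ => isFree lam mu e v p.1 p.2 ∧ e p.1 p.2 = v + 1)
            (skewCells lam mu) := by
  ext ⟨r, c⟩
  simp only [Finset.mem_union, mem_cfilter]
  constructor
  · rintro ⟨hmem, he⟩
    by_cases hfree : isFree lam mu e v r c
    · exact Or.inr ⟨hmem, hfree, he⟩
    · exact Or.inl ⟨hmem, fixedHigh_of_not_free hmem he hfree⟩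
  · rintro (⟨hmem, hf⟩ | ⟨hmem, _, he⟩)
    · exact ⟨hmem, hf.1⟩
    · exact ⟨hmem, he⟩

lemma old_filter_v (e : ℕ → ℕ → ℕ) (v : ℕ) :
    cfilter (fun p : ℕ × ℕ => e p.1 p.2 = v) (skewCells lam mu)
      = cfilter (fun p : ℕ × ℕ => fixedLow lam mu e v p.1 p.2) (skewCells lam mu)
        ∪ cfilter (fun p : ℕ × ℕ => isFree lam mu e v p.1 p.2 ∧ e p.1 p.2 = v)
            (skewCells lam mu) := by
  ext ⟨r, c⟩
  simp only [Finset.mem_union, mem_cfilter]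
  constructor
  · rintro ⟨hmem, he⟩
    by_cases hfree : isFree lam mu e v r c
    · exact Or.inr ⟨hmem, hfree, he⟩
    · exact Or.inl ⟨hmem, fixedLow_of_not_free hmem he hfree⟩
  · rintro (⟨hmem, hf⟩ | ⟨hmem, _, he⟩)
    · exact ⟨hmem, hf.1⟩
    · exact ⟨hmem, he⟩

lemma disj_low (e : ℕ → ℕ → ℕ) (v : ℕ) (q : ℕ → ℕ → Prop) :
    Disjoint (cfilter (fun p : ℕ × ℕ => fixedLow lam mu e v p.1 p.2) (skewCells lam mu))
      (cfilter (fun p : ℕ × ℕ => isFree lam mu e v p.1 p.2 ∧ q p.1 p.2)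
        (skewCells lam mu)) := by
  rw [Finset.disjoint_left]
  rintro ⟨r, c⟩ h1 h2
  exact (mem_cfilter.mp h1).2.not_free (mem_cfilter.mp h2).2.1

lemma disj_high (e : ℕ → ℕ → ℕ) (v : ℕ) (q : ℕ → ℕ → Prop) :
    Disjoint (cfilter (fun p : ℕ × ℕ => fixedHigh lam mu e v p.1 p.2) (skewCells lam mu))
      (cfilter (fun p : ℕ × ℕ => isFree lam mu e v p.1 p.2 ∧ q p.1 p.2)
        (skewCells lam mu)) := by
  rw [Finset.disjoint_left]
  rintro ⟨r, c⟩ h1 h2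
  exact (mem_cfilter.mp h1).2.not_free (mem_cfilter.mp h2).2.1

lemma bcount_le (e : ℕ → ℕ → ℕ) (v r : ℕ) :
    bcount lam mu e v r ≤ (freeRow lam mu e v r).card :=
  cfilter_card_le _ _

lemma row_count_v1 (e : ℕ → ℕ → ℕ) (v r : ℕ) :
    (cfilter (fun c => cntLe lam mu e v r c ≤ bcount lam mu e v r)
      (freeRow lam mu e v r)).card = bcount lam mu e v r :=
  filter_cntLe_card (freeRow lam mu e v r).card (freeRow lam mu e v r)
    (bcount lam mu e v r) rfl (bcount_le e v r)

lemma row_count_v (e : ℕ → ℕ → ℕ) (v r : ℕ) :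
    (cfilter (fun c => ¬ (cntLe lam mu e v r c ≤ bcount lam mu e v r))
      (freeRow lam mu e v r)).card
      = (freeRow lam mu e v r).card - bcount lam mu e v r := by
  have h1 := row_count_v1 (lam := lam) (mu := mu) e v r
  have h2 := cfilter_card_add_neg
    (fun c => cntLe lam mu e v r c ≤ bcount lam mu e v r) (freeRow lam mu e v r)
  omega

lemma row_count_a (e : ℕ → ℕ → ℕ) (v r : ℕ) :
    (cfilter (fun c => e r c = v) (freeRow lam mu e v r)).card
      = (freeRow lam mu e v r).card - bcount lam mu e v r := by
  have h2 := cfilter_card_add_neg (fun c => e r c = v + 1) (freeRow lam mu e v r)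
  have h3 : cfilter (fun c => ¬ e r c = v + 1) (freeRow lam mu e v r)
      = cfilter (fun c => e r c = v) (freeRow lam mu e v r) := by
    ext c
    simp only [mem_cfilter, and_congr_right_iff]
    intro hc
    have := (mem_freeRow.mp hc).val
    omega
  rw [h3] at h2
  have hb : bcount lam mu e v r
      = (cfilter (fun c => e r c = v + 1) (freeRow lam mu e v r)).card := rfl
  omega

lemma bkT_wt_v (T : SkewSSYT lam mu) (v : ℕ) (hv : 1 ≤ v) :
    (bkT T v hv).wt v = T.wt (v + 1) := by
  rw [wt_eq, wt_eq, bkT_entry]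
  have hX : (cfilter (fun p : ℕ × ℕ => isFree lam mu T.entry v p.1 p.2 ∧
        cntLe lam mu T.entry v p.1 p.2 ≤ bcount lam mu T.entry v p.1)
        (skewCells lam mu)).card
      = (cfilter (fun p : ℕ × ℕ => isFree lam mu T.entry v p.1 p.2 ∧
        T.entry p.1 p.2 = v + 1) (skewCells lam mu)).card := by
    rw [card_free_filter T.entry v
        (fun a b => cntLe lam mu T.entry v a b ≤ bcount lam mu T.entry v a),
      card_free_filter T.entry v (fun a b => T.entry a b = v + 1)]
    apply Finset.sum_congr rfl
    intro r _
    rw [row_count_v1]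
    rfl
  rw [bk_filter_v, old_filter_v1 (e := T.entry) (v := v),
    Finset.card_union_of_disjoint (disj_low T.entry v
      (fun a b => cntLe lam mu T.entry v a b ≤ bcount lam mu T.entry v a)),
    Finset.card_union_of_disjoint (disj_high T.entry v (fun a b => T.entry a b = v + 1)),
    card_fixedLow_eq_fixedHigh, hX]

lemma bkT_wt_v1 (T : SkewSSYT lam mu) (v : ℕ) (hv : 1 ≤ v) :
    (bkT T v hv).wt (v + 1) = T.wt v := by
  rw [wt_eq, wt_eq, bkT_entry]
  have hX : (cfilter (fun p : ℕ × ℕ => isFree lam mu T.entry v p.1 p.2 ∧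
        ¬ (cntLe lam mu T.entry v p.1 p.2 ≤ bcount lam mu T.entry v p.1))
        (skewCells lam mu)).card
      = (cfilter (fun p : ℕ × ℕ => isFree lam mu T.entry v p.1 p.2 ∧
        T.entry p.1 p.2 = v) (skewCells lam mu)).card := by
    rw [card_free_filter T.entry v
        (fun a b => ¬ (cntLe lam mu T.entry v a b ≤ bcount lam mu T.entry v a)),
      card_free_filter T.entry v (fun a b => T.entry a b = v)]
    apply Finset.sum_congr rfl
    intro r _
    rw [row_count_v, row_count_a]
  rw [bk_filter_v1, old_filter_v (e := T.entry) (v := v),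
    Finset.card_union_of_disjoint (disj_high T.entry v
      (fun a b => ¬ (cntLe lam mu T.entry v a b ≤ bcount lam mu T.entry v a))),
    Finset.card_union_of_disjoint (disj_low T.entry v (fun a b => T.entry a b = v)),
    ← card_fixedLow_eq_fixedHigh, hX]

lemma bkT_wt_other (T : SkewSSYT lam mu) (v : ℕ) (hv : 1 ≤ v) (u : ℕ)
    (h1 : u ≠ v) (h2 : u ≠ v + 1) : (bkT T v hv).wt u = T.wt u := by
  rw [wt_eq, wt_eq, bkT_entry]
  congr 1
  ext ⟨r, c⟩
  simp only [mem_cfilter, and_congr_right_iff]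
  intro hmem
  by_cases hfree : isFree lam mu T.entry v r c
  · have hval := hfree.val
    have hlo := bk_ge hfree
    have hhi := bk_le hfree
    constructor
    · intro h; omega
    · intro h; omega
  · rw [bkEntry_of_not_free hfree]

end Weights
section Involution

variable {lam mu : YoungDiagram}

lemma mem_S_of_entry_pos {T : SkewSSYT lam mu} {r c x : ℕ} (h : T.entry r c = x)
    (hx : 1 ≤ x) : (r, c) ∈ skewCells lam mu := by
  by_contra hm
  rw [T.zeros' r c hm] at h
  omega

lemma bk_fixedLow_iff (T : SkewSSYT lam mu) (v : ℕ) (hv : 1 ≤ v) (r c : ℕ) :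
    fixedLow lam mu (bkEntry lam mu T.entry v) v r c ↔ fixedLow lam mu T.entry v r c := by
  constructor
  · rintro ⟨h1, h2, h3⟩
    have hmem : (r, c) ∈ skewCells lam mu := by
      by_contra hm
      have hnf : ¬ isFree lam mu T.entry v r c := fun h => hm h.mem
      rw [bkEntry_of_not_free hnf, T.zeros' r c hm] at h1
      omega
    by_cases hfree : isFree lam mu T.entry v r c
    · exfalso
      have hgt : T.entry r c < T.entry (r + 1) c :=
        T.col_strict' _ _ _ (lt_add_one r) hmem h2
      have hval := hfree.val
      have hge : v + 2 ≤ T.entry (r + 1) c := by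
        rcases hval with hv1 | hv1
        · by_contra hcon
          have : T.entry (r + 1) c = v + 1 := by omega
          exact hfree.not_fixedLow hv1 ⟨hv1, h2, this⟩
        · omega
      have hnf2 : ¬ isFree lam mu T.entry v (r + 1) c := by
        intro h
        rcases h.val with h' | h' <;> omega
      rw [bkEntry_of_not_free hnf2] at h3
      omega
    · rw [bkEntry_of_not_free hfree] at h1
      by_cases hfree2 : isFree lam mu T.entry v (r + 1) c
      · have hgt : T.entry r c < T.entry (r + 1) c :=
          T.col_strict' _ _ _ (lt_add_one r) hmem h2
        have hval := hfree2.val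
        have : T.entry (r + 1) c = v + 1 := by omega
        exact ⟨h1, h2, this⟩
      · rw [bkEntry_of_not_free hfree2] at h3
        exact ⟨h1, h2, h3⟩
  · rintro ⟨h1, h2, h3⟩
    have hmem : (r, c) ∈ skewCells lam mu := mem_S_of_entry_pos h1 hv
    have hnf : ¬ isFree lam mu T.entry v r c := fixedLow.not_free ⟨h1, h2, h3⟩
    have hnf2 : ¬ isFree lam mu T.entry v (r + 1) c :=
      fixedHigh.not_free ⟨h3, r, rfl, hmem, h1⟩
    exact ⟨by rw [bkEntry_of_not_free hnf]; exact h1, h2,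
      by rw [bkEntry_of_not_free hnf2]; exact h3⟩

lemma bk_fixedHigh_iff (T : SkewSSYT lam mu) (v : ℕ) (hv : 1 ≤ v) (r c : ℕ) :
    fixedHigh lam mu (bkEntry lam mu T.entry v) v r c ↔ fixedHigh lam mu T.entry v r c := by
  constructor
  · rintro ⟨h1, r', rfl, h2, h3⟩
    have hmem : (r' + 1, c) ∈ skewCells lam mu := by
      by_contra hm
      have hnf : ¬ isFree lam mu T.entry v (r' + 1) c := fun h => hm h.mem
      rw [bkEntry_of_not_free hnf, T.zeros' _ c hm] at h1
      omega
    by_cases hfree : isFree lam mu T.entry v r' c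
    · exfalso
      have hgt : T.entry r' c < T.entry (r' + 1) c :=
        T.col_strict' _ _ _ (lt_add_one r') h2 hmem
      have hval := hfree.val
      by_cases hup : T.entry (r' + 1) c = v + 1
      · have hval' : T.entry r' c = v := by omega
        exact hfree.not_fixedLow hval' ⟨hval', hmem, hup⟩
      · have hge : v + 2 ≤ T.entry (r' + 1) c := by omega
        have hnf2 : ¬ isFree lam mu T.entry v (r' + 1) c := by
          intro h
          rcases h.val with h' | h' <;> omega
        rw [bkEntry_of_not_free hnf2] at h1
        omega
    · rw [bkEntry_of_not_free hfree] at h3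
      by_cases hfree2 : isFree lam mu T.entry v (r' + 1) c
      · have hgt : T.entry r' c < T.entry (r' + 1) c :=
          T.col_strict' _ _ _ (lt_add_one r') h2 hmem
        have hval := hfree2.val
        have : T.entry (r' + 1) c = v + 1 := by omega
        exact ⟨this, r', rfl, h2, h3⟩
      · rw [bkEntry_of_not_free hfree2] at h1
        exact ⟨h1, r', rfl, h2, h3⟩
  · rintro ⟨h1, r', rfl, h2, h3⟩
    have hmem : (r' + 1, c) ∈ skewCells lam mu := mem_S_of_entry_pos h1 (by omega)
    have hnf : ¬ isFree lam mu T.entry v (r' + 1) c :=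
      fixedHigh.not_free ⟨h1, r', rfl, h2, h3⟩
    have hnf2 : ¬ isFree lam mu T.entry v r' c :=
      fixedLow.not_free ⟨h3, hmem, h1⟩
    exact ⟨by rw [bkEntry_of_not_free hnf]; exact h1, r', rfl, h2,
      by rw [bkEntry_of_not_free hnf2]; exact h3⟩

lemma bk_free_iff (T : SkewSSYT lam mu) (v : ℕ) (hv : 1 ≤ v) (r c : ℕ) :
    isFree lam mu (bkEntry lam mu T.entry v) v r c ↔ isFree lam mu T.entry v r c := by
  constructor
  · rintro ⟨hmem, hor⟩
    by_contra hnf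
    rw [bkEntry_of_not_free hnf] at hor
    rcases hor with ⟨h1, h2⟩ | ⟨h1, h2⟩
    · exact h2 ((bk_fixedLow_iff T v hv r c).mpr (fixedLow_of_not_free hmem h1 hnf))
    · exact h2 ((bk_fixedHigh_iff T v hv r c).mpr (fixedHigh_of_not_free hmem h1 hnf))
  · intro hfree
    refine ⟨hfree.mem, ?_⟩
    have hbk2 : bkEntry lam mu T.entry v r c = v
        ∨ bkEntry lam mu T.entry v r c = v + 1 := by
      rw [bkEntry_of_free hfree]
      split_ifs
      exacts [Or.inl rfl, Or.inr rfl]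
    rcases hbk2 with hbk | hbk
    · refine Or.inl ⟨hbk, ?_⟩
      rw [bk_fixedLow_iff T v hv r c]
      exact fun hf => hf.not_free hfree
    · refine Or.inr ⟨hbk, ?_⟩
      rw [bk_fixedHigh_iff T v hv r c]
      exact fun hf => hf.not_free hfree

lemma bk_freeRow_eq (T : SkewSSYT lam mu) (v : ℕ) (hv : 1 ≤ v) (r : ℕ) :
    freeRow lam mu (bkEntry lam mu T.entry v) v r = freeRow lam mu T.entry v r := by
  ext c
  rw [mem_freeRow, mem_freeRow, bk_free_iff T v hv]

lemma bk_cntLe_eq (T : SkewSSYT lam mu) (v : ℕ) (hv : 1 ≤ v) (r c : ℕ) :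
    cntLe lam mu (bkEntry lam mu T.entry v) v r c = cntLe lam mu T.entry v r c := by
  unfold cntLe
  rw [bk_freeRow_eq T v hv]

lemma bk_bcount_eq (T : SkewSSYT lam mu) (v : ℕ) (hv : 1 ≤ v) (r : ℕ) :
    bcount lam mu (bkEntry lam mu T.entry v) v r
      = (freeRow lam mu T.entry v r).card - bcount lam mu T.entry v r := by
  unfold bcount
  rw [bk_freeRow_eq T v hv]
  have hs : cfilter (fun c => bkEntry lam mu T.entry v r c = v + 1)
      (freeRow lam mu T.entry v r)
      = cfilter (fun c => ¬ (cntLe lam mu T.entry v r c ≤ bcount lam mu T.entry v r))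
        (freeRow lam mu T.entry v r) := by
    ext c
    simp only [mem_cfilter, and_congr_right_iff]
    intro hc
    have hfree := mem_freeRow.mp hc
    rw [bkEntry_of_free hfree]
    split_ifs with h
    · exact iff_of_false (by omega) (fun hh => hh h)
    · exact iff_of_true rfl h
  rw [hs, row_count_v]
  rfl

lemma bk_invol (T : SkewSSYT lam mu) (v : ℕ) (hv : 1 ≤ v) :
    bkT (bkT T v hv) v hv = T := by
  apply SkewSSYT.ext
  funext r c
  show bkEntry lam mu (bkEntry lam mu T.entry v) v r c = T.entry r c
  by_cases hfree : isFree lam mu T.entry v r c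
  · have h' : isFree lam mu (bkEntry lam mu T.entry v) v r c :=
      (bk_free_iff T v hv r c).mpr hfree
    rw [bkEntry_of_free h', bk_cntLe_eq T v hv, bk_bcount_eq T v hv]
    set F := freeRow lam mu T.entry v r with hF
    set A := cfilter (fun c => T.entry r c = v) F with hA
    set B := cfilter (fun c => T.entry r c = v + 1) F with hB
    have hFAB : F = A ∪ B := by
      ext x
      simp only [hA, hB, Finset.mem_union, mem_cfilter]
      constructor
      · intro hx
        rcases (mem_freeRow.mp hx).val with h | h
        · exact Or.inl ⟨hx, h⟩
        · exact Or.inr ⟨hx, h⟩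
      · rintro (⟨hx, _⟩ | ⟨hx, _⟩) <;> exact hx
    have hdisj : Disjoint A B := by
      rw [Finset.disjoint_left]
      intro x hx1 hx2
      have e1 := (mem_cfilter.mp hx1).2
      have e2 := (mem_cfilter.mp hx2).2
      omega
    have hlt : ∀ a ∈ A, ∀ b ∈ B, a < b := by
      intro a ha b hb
      obtain ⟨haF, hav⟩ := mem_cfilter.mp ha
      obtain ⟨hbF, hbv⟩ := mem_cfilter.mp hb
      have hma : (r, a) ∈ skewCells lam mu := (mem_freeRow.mp haF).mem
      have hmb : (r, b) ∈ skewCells lam mu := (mem_freeRow.mp hbF).mem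
      by_contra hab
      have hba : b ≤ a := by omega
      rcases eq_or_lt_of_le hba with rfl | hba'
      · omega
      · have := T.row_weak' r b a hba' hmb hma
        omega
    have hcardF : F.card = A.card + B.card := by
      rw [hFAB, Finset.card_union_of_disjoint hdisj]
    have hbcount : bcount lam mu T.entry v r = B.card := rfl
    have hcF : c ∈ F := mem_freeRow.mpr hfree
    have hkey := cnt_le_iff_mem A B hdisj hlt c (hFAB ▸ hcF)
    have hcnt : cntLe lam mu T.entry v r c
        = (cfilter (fun c' => c' ≤ c) (A ∪ B)).card := by
      unfold cntLe
      rw [← hF, hFAB]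
    rcases hfree.val with hval | hval
    · have hcA : c ∈ A := mem_cfilter.mpr ⟨hcF, hval⟩
      have hle : cntLe lam mu T.entry v r c
          ≤ F.card - bcount lam mu T.entry v r := by
        rw [hcnt, hbcount]
        have := hkey.mpr hcA
        omega
      rw [if_pos hle, hval]
    · have hcB : c ∈ B := mem_cfilter.mpr ⟨hcF, hval⟩
      have hcA : c ∉ A := fun h => (Finset.disjoint_left.mp hdisj h) hcB
      have hnle : ¬ (cntLe lam mu T.entry v r c
          ≤ F.card - bcount lam mu T.entry v r) := by
        rw [hcnt, hbcount]
        intro hcon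
        exact hcA (hkey.mp (by omega))
      rw [if_neg hnle, hval]
  · have h' : ¬ isFree lam mu (bkEntry lam mu T.entry v) v r c :=
      fun h => hfree ((bk_free_iff T v hv r c).mp h)
    rw [bkEntry_of_not_free h', bkEntry_of_not_free hfree]

end Involution
section CardEq

variable {lam mu : YoungDiagram}

lemma bkT_mem_content {n : ℕ} (β γ : Fin n → ℕ) (k : ℕ) (hk : k + 1 < n)
    (hγ1 : γ ⟨k, Nat.lt_of_succ_lt hk⟩ = β ⟨k + 1, hk⟩)
    (hγ2 : γ ⟨k + 1, hk⟩ = β ⟨k, Nat.lt_of_succ_lt hk⟩)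
    (hother : ∀ i : Fin n, (i : ℕ) ≠ k → (i : ℕ) ≠ k + 1 → γ i = β i)
    (T : SkewSSYT lam mu) (hT : T ∈ SSYTcontent lam mu β) :
    bkT T (k + 1) k.succ_pos ∈ SSYTcontent lam mu γ := by
  obtain ⟨hwt, hbd⟩ := hT
  constructor
  · intro i
    by_cases h1 : (i : ℕ) = k
    · have hi : i = ⟨k, Nat.lt_of_succ_lt hk⟩ := Fin.ext h1
      calc (bkT T (k + 1) k.succ_pos).wt ((i : ℕ) + 1)
          = (bkT T (k + 1) k.succ_pos).wt (k + 1) := by rw [h1]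
        _ = T.wt ((k + 1) + 1) := bkT_wt_v T (k + 1) k.succ_pos
        _ = β ⟨k + 1, hk⟩ := hwt ⟨k + 1, hk⟩
        _ = γ ⟨k, Nat.lt_of_succ_lt hk⟩ := hγ1.symm
        _ = γ i := congrArg γ hi.symm
    · by_cases h2 : (i : ℕ) = k + 1
      · have hi : i = ⟨k + 1, hk⟩ := Fin.ext h2
        calc (bkT T (k + 1) k.succ_pos).wt ((i : ℕ) + 1)
            = (bkT T (k + 1) k.succ_pos).wt ((k + 1) + 1) := by rw [h2]
          _ = T.wt (k + 1) := bkT_wt_v1 T (k + 1) k.succ_pos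
          _ = β ⟨k, Nat.lt_of_succ_lt hk⟩ := hwt ⟨k, Nat.lt_of_succ_lt hk⟩
          _ = γ ⟨k + 1, hk⟩ := hγ2.symm
          _ = γ i := congrArg γ hi.symm
      · rw [bkT_wt_other T (k + 1) k.succ_pos ((i : ℕ) + 1) (by omega) (by omega)]
        exact (hwt i).trans (hother i h1 h2).symm
  · intro r c hm
    by_cases hfree : isFree lam mu T.entry (k + 1) r c
    · have := bk_le hfree
      show bkEntry lam mu T.entry (k + 1) r c ≤ n
      omega
    · show bkEntry lam mu T.entry (k + 1) r c ≤ n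
      rw [bkEntry_of_not_free hfree]
      exact hbd r c hm

lemma card_content_swap {n : ℕ} (β γ : Fin n → ℕ) (k : ℕ) (hk : k + 1 < n)
    (hγ1 : γ ⟨k, Nat.lt_of_succ_lt hk⟩ = β ⟨k + 1, hk⟩)
    (hγ2 : γ ⟨k + 1, hk⟩ = β ⟨k, Nat.lt_of_succ_lt hk⟩)
    (hother : ∀ i : Fin n, (i : ℕ) ≠ k → (i : ℕ) ≠ k + 1 → γ i = β i) :
    Nat.card (SSYTcontent lam mu β) = Nat.card (SSYTcontent lam mu γ) := by
  apply Nat.card_congr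
  exact
    { toFun := fun T => ⟨bkT T.1 (k + 1) k.succ_pos,
        bkT_mem_content β γ k hk hγ1 hγ2 hother T.1 T.2⟩
      invFun := fun T => ⟨bkT T.1 (k + 1) k.succ_pos,
        bkT_mem_content γ β k hk hγ2.symm hγ1.symm
          (fun i a b => (hother i a b).symm) T.1 T.2⟩
      left_inv := fun T => Subtype.ext (bk_invol T.1 (k + 1) k.succ_pos)
      right_inv := fun T => Subtype.ext (bk_invol T.1 (k + 1) k.succ_pos) }

/-- Rotation of the first `k+1` entries of a composition. -/
def rotc (n k : ℕ) (hk : k < n) (b : Fin n → ℕ) : Fin n → ℕ := fun i =>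
  if h : (i : ℕ) < k then b ⟨(i : ℕ) + 1, by omega⟩
  else if (i : ℕ) = k then b ⟨0, by omega⟩
  else b i

lemma rotc_lt {n k : ℕ} {hk : k < n} {b : Fin n → ℕ} {i : Fin n} (h : (i : ℕ) < k) :
    rotc n k hk b i = b ⟨(i : ℕ) + 1, by omega⟩ := dif_pos h

lemma rotc_eqk {n k : ℕ} {hk : k < n} {b : Fin n → ℕ} {i : Fin n} (h : (i : ℕ) = k) :
    rotc n k hk b i = b ⟨0, by omega⟩ := by
  unfold rotc
  rw [dif_neg (by omega), if_pos h]

lemma rotc_gt {n k : ℕ} {hk : k < n} {b : Fin n → ℕ} {i : Fin n} (h : k < (i : ℕ)) :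
    rotc n k hk b i = b i := by
  unfold rotc
  rw [dif_neg (by omega), if_neg (by omega)]

lemma rotc_zero {n : ℕ} (hn : 0 < n) (b : Fin n → ℕ) : rotc n 0 hn b = b := by
  funext i
  by_cases h : (i : ℕ) = 0
  · rw [rotc_eqk h]
    congr 1
    exact Fin.ext h.symm
  · exact rotc_gt (by omega)

lemma card_rotc {n : ℕ} (α : Fin n → ℕ) :
    ∀ (k : ℕ) (hk : k < n),
      Nat.card (SSYTcontent lam mu (rotc n k hk α)) = Nat.card (SSYTcontent lam mu α) := by
  intro k
  induction k with
  | zero => intro hk; rw [rotc_zero hk]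
  | succ k ih =>
    intro hk
    have hk' : k < n := by omega
    have hg1 : rotc n (k + 1) hk α ⟨k, Nat.lt_of_succ_lt hk⟩
        = rotc n k hk' α ⟨k + 1, hk⟩ := by
      rw [rotc_lt (i := (⟨k, Nat.lt_of_succ_lt hk⟩ : Fin n)) (Nat.lt_succ_self k),
        rotc_gt (i := (⟨k + 1, hk⟩ : Fin n)) (Nat.lt_succ_self k)]
      try exact congrArg α (Fin.ext rfl)
    have hg2 : rotc n (k + 1) hk α ⟨k + 1, hk⟩
        = rotc n k hk' α ⟨k, Nat.lt_of_succ_lt hk⟩ := by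
      rw [rotc_eqk (i := (⟨k + 1, hk⟩ : Fin n)) rfl,
        rotc_eqk (i := (⟨k, Nat.lt_of_succ_lt hk⟩ : Fin n)) rfl]
    have hg3 : ∀ i : Fin n, (i : ℕ) ≠ k → (i : ℕ) ≠ k + 1 →
        rotc n (k + 1) hk α i = rotc n k hk' α i := by
      intro i ha hb
      rcases Nat.lt_or_ge (i : ℕ) k with h | h
      · rw [rotc_lt (by omega), rotc_lt h]
      · have h2 : k + 1 < (i : ℕ) := by omega
        rw [rotc_gt (by omega), rotc_gt (by omega)]
    have hstep := card_content_swap (lam := lam) (mu := mu)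
      (rotc n k hk' α) (rotc n (k + 1) hk α) k hk hg1 hg2 hg3
    rw [← hstep]
    exact ih hk'

lemma rotc_last {n : ℕ} (hn : 0 < n) (b : Fin n → ℕ) :
    rotc n (n - 1) (Nat.sub_lt hn Nat.one_pos) b = cyc 1 b := by
  funext i
  have hi : (i : ℕ) < n := i.isLt
  by_cases h : (i : ℕ) < n - 1
  · rw [rotc_lt h]
    unfold cyc
    congr 1
    exact Fin.ext (by simp [Nat.mod_eq_of_lt (by omega : (i : ℕ) + 1 < n)])
  · have h2 : (i : ℕ) = n - 1 := by omega
    rw [rotc_eqk h2]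
    unfold cyc
    congr 1
    apply Fin.ext
    show (0 : ℕ) = ((i : ℕ) + 1) % n
    rw [show (i : ℕ) + 1 = n by omega, Nat.mod_self]

lemma cyc_zero {n : ℕ} (α : Fin n → ℕ) : cyc 0 α = α := by
  funext i
  unfold cyc
  congr 1
  exact Fin.ext (by simp [Nat.mod_eq_of_lt i.isLt])

lemma cyc_succ {n : ℕ} (r : ℕ) (α : Fin n → ℕ) : cyc (r + 1) α = cyc 1 (cyc r α) := by
  funext i
  unfold cyc
  congr 1
  apply Fin.ext
  show ((i : ℕ) + (r + 1)) % n = (((i : ℕ) + 1) % n + r) % n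
  rw [Nat.mod_add_mod]
  congr 1
  omega

lemma card_cyc {n : ℕ} (hn : 0 < n) (α : Fin n → ℕ) (r : ℕ) :
    Nat.card (SSYTcontent lam mu (cyc r α)) = Nat.card (SSYTcontent lam mu α) := by
  induction r with
  | zero => rw [cyc_zero]
  | succ r ih =>
    rw [cyc_succ]
    have h1 : Nat.card (SSYTcontent lam mu (cyc 1 (cyc r α)))
        = Nat.card (SSYTcontent lam mu (cyc r α)) := by
      rw [← rotc_last hn (cyc r α)]
      exact card_rotc (cyc r α) (n - 1) (Nat.sub_lt hn Nat.one_pos)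
    rw [h1, ih]

end CardEq
section Finiteness

variable {lam mu : YoungDiagram}

lemma finite_SSYTbdd (lam mu : YoungDiagram) (n : ℕ) : (SSYTbdd lam mu n).Finite := by
  classical
  have hinj : Set.InjOn
      (fun (T : SkewSSYT lam mu) (c : ↥(skewCells lam mu : Finset (ℕ × ℕ))) =>
        T.entry c.1.1 c.1.2) (SSYTbdd lam mu n) := by
    intro T1 _ T2 _ heq
    apply SkewSSYT.ext
    funext r c
    by_cases hm : (r, c) ∈ skewCells lam mu
    · exact congrFun heq ⟨(r, c), hm⟩
    · rw [T1.zeros' r c hm, T2.zeros' r c hm]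
  apply Set.Finite.of_finite_image ?_ hinj
  apply Set.Finite.subset (Set.Finite.pi (fun _ => Set.finite_Iic n))
  rintro g ⟨T, hT, rfl⟩
  intro c _
  exact hT c.1.1 c.1.2 c.2

lemma finite_content (lam mu : YoungDiagram) {n : ℕ} (β : Fin n → ℕ) :
    (SSYTcontent lam mu β).Finite :=
  (finite_SSYTbdd lam mu n).subset (fun _ hT => hT.2)

end Finiteness

section Zwt

lemma zwt_sub {n : ℕ} (hn : 0 < n) (α : Fin n → ℕ) (m : ℕ) (hm : ∑ i, α i = m)
    (r : ℕ) :
    ((zwt α r : ℕ) : ZMod n) = ((zwt α 0 : ℕ) : ZMod n) - (r : ZMod n) * (m : ZMod n) := by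
  haveI : NeZero n := ⟨hn.ne'⟩
  have key : ∀ s : ℕ, ((zwt α s : ℕ) : ZMod n)
      = ∑ i : Fin n, (((i : ℕ) : ZMod n) + 1 - (s : ZMod n)) * ((α i : ℕ) : ZMod n) := by
    intro s
    unfold zwt
    push_cast
    set sf : Fin n := ⟨s % n, Nat.mod_lt _ hn⟩ with hsf
    have hcyc : ∀ j : Fin n, cyc s α j = α (j + sf) := by
      intro j
      unfold cyc
      congr 1
      apply Fin.ext
      show ((j : ℕ) + s) % n = ((j + sf : Fin n) : ℕ)
      rw [Fin.add_def]
      show ((j : ℕ) + s) % n = ((j : ℕ) + s % n) % n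
      conv_lhs => rw [Nat.add_mod]
      rw [Nat.mod_eq_of_lt j.isLt]
    have hcast : ∀ j : Fin n, (((j + sf : Fin n) : ℕ) : ZMod n)
        = ((j : ℕ) : ZMod n) + (s : ZMod n) := by
      intro j
      rw [Fin.add_def]
      show (((((j : ℕ) + s % n) % n : ℕ)) : ZMod n) = _
      rw [ZMod.natCast_mod, Nat.cast_add, ZMod.natCast_mod]
    apply Fintype.sum_equiv (Equiv.addRight sf)
    intro j
    simp only [Equiv.coe_addRight]
    rw [hcyc j, hcast j]
    ring
  rw [key r, key 0]
  simp only [Nat.cast_zero, sub_zero]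
  have hsum : (∑ i : Fin n, ((α i : ℕ) : ZMod n)) = (m : ZMod n) := by
    rw [← Nat.cast_sum, hm]
  have hsplit : ∀ i ∈ (Finset.univ : Finset (Fin n)),
      (((i : ℕ) : ZMod n) + 1 - (r : ZMod n)) * ((α i : ℕ) : ZMod n)
      = (((i : ℕ) : ZMod n) + 1) * ((α i : ℕ) : ZMod n)
        - (r : ZMod n) * ((α i : ℕ) : ZMod n) := by
    intro i _
    ring
  rw [Finset.sum_congr rfl hsplit, Finset.sum_sub_distrib, ← Finset.mul_sum, hsum]

lemma pow_eq_of_modEq (n : ℕ) (x : ℂ) (hx : x ^ n = 1) {a b : ℕ} (h : a ≡ b [MOD n]) :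
    x ^ a = x ^ b := by
  rcases le_total a b with hab | hab
  · obtain ⟨t, ht⟩ := (Nat.modEq_iff_dvd' hab).mp h
    have hb : b = a + n * t := by omega
    rw [hb, pow_add, pow_mul, hx, one_pow, mul_one]
  · obtain ⟨t, ht⟩ := (Nat.modEq_iff_dvd' hab).mp h.symm
    have ha : a = b + n * t := by omega
    rw [ha, pow_add, pow_mul, hx, one_pow, mul_one]

lemma geom_vanish (n : ℕ) (w : ℂ) (hw : w ^ n = 1) (hw1 : w ≠ 1) :
    ∑ r ∈ Finset.Icc 1 n, w ^ r = 0 := by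
  have h1 : ∑ r ∈ Finset.Icc 1 n, w ^ r = ∑ i ∈ Finset.range n, w * w ^ i := by
    refine Finset.sum_bij' (fun r _ => r - 1) (fun i _ => i + 1) ?_ ?_ ?_ ?_ ?_ <;>
      intro a ha <;> simp only [Finset.mem_Icc, Finset.mem_range] at ha ⊢
    all_goals first
    | omega
    | (rw [← pow_succ']; congr 1; omega)
  rw [h1, ← Finset.mul_sum, geom_sum_eq hw1, hw, sub_self, zero_div, mul_zero]

lemma icc_mod_inj (n : ℕ) (hn : 0 < n) {r s : ℕ} (hr : r ∈ Finset.Icc 1 n)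
    (hs : s ∈ Finset.Icc 1 n) (h : r ≡ s [MOD n]) : r = s := by
  rw [Finset.mem_Icc] at hr hs
  unfold Nat.ModEq at h
  by_cases h1 : r = n <;> by_cases h2 : s = n
  · rw [h1, h2]
  · exfalso
    rw [h1, Nat.mod_self, Nat.mod_eq_of_lt (by omega)] at h
    omega
  · exfalso
    rw [h2, Nat.mod_self, Nat.mod_eq_of_lt (by omega)] at h
    omega
  · rwa [Nat.mod_eq_of_lt (by omega), Nat.mod_eq_of_lt (by omega)] at h

end Zwt

/-- For `X = ⋃_{r=1}^n SSYT(λ/μ, cyc_r α)` and `f(q) = Σ_{T ∈ X} q^{Σ_j j⋅w_j(T)}`: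
if `gcd(|λ/μ|, n) = 1` then `f` vanishes at all powers `ξ^k` (`n ∤ k`) of a primitive
`n`-th root of unity `ξ`, and `f(1) = |X| = n ⋅ |SSYT(λ/μ, α)|`. -/
theorem csp_polynomial_root_values (lam mu : YoungDiagram) (hsub : mu ≤ lam)
    (n : ℕ) (hn : 0 < n) (α : Fin n → ℕ) (hα : ∑ i, α i = lam.card - mu.card)
    (hgcd : Nat.gcd (lam.card - mu.card) n = 1)
    (Xset : Set (SkewSSYT lam mu))
    (hX : Xset = ⋃ r ∈ Finset.Icc 1 n, SSYTcontent lam mu (cyc r α))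
    (f : ℂ → ℂ) (hf : ∀ q : ℂ, f q = ∑ᶠ T ∈ Xset, q ^ weightedSum n T)
    (ξ : ℂ) (hξ : IsPrimitiveRoot ξ n) :
    (∀ k : ℤ, ¬ (n : ℤ) ∣ k → f (ξ ^ k) = 0) ∧
    f 1 = (Nat.card ↥Xset : ℂ) ∧
    Nat.card ↥Xset = n * Nat.card ↥(SSYTcontent lam mu α) := by
  classical
  have hcop : Nat.Coprime (lam.card - mu.card) n := hgcd
  have hfin : ∀ β : Fin n → ℕ, (SSYTcontent lam mu β).Finite :=
    fun β => finite_content lam mu β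
  have hzmod : ∀ r : ℕ, ((zwt α r : ℕ) : ZMod n)
      = ((zwt α 0 : ℕ) : ZMod n) - (r : ZMod n) * ((lam.card - mu.card : ℕ) : ZMod n) :=
    fun r => zwt_sub hn α _ hα r
  have hunit : IsUnit ((lam.card - mu.card : ℕ) : ZMod n) :=
    ⟨ZMod.unitOfCoprime _ hcop, ZMod.coe_unitOfCoprime _ hcop⟩
  have hzinj : ∀ r ∈ Finset.Icc 1 n, ∀ s ∈ Finset.Icc 1 n, zwt α r = zwt α s → r = s := by
    intro r hr s hs hz
    have h1 : ((zwt α r : ℕ) : ZMod n) = ((zwt α s : ℕ) : ZMod n) := by rw [hz]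
    rw [hzmod r, hzmod s] at h1
    have h2 : (r : ZMod n) * ((lam.card - mu.card : ℕ) : ZMod n)
        = (s : ZMod n) * ((lam.card - mu.card : ℕ) : ZMod n) := sub_right_injective h1
    have h3 : (r : ZMod n) = (s : ZMod n) := hunit.mul_right_cancel h2
    exact icc_mod_inj n hn hr hs ((ZMod.natCast_eq_natCast_iff r s n).mp h3)
  have hdisj : (↑(Finset.Icc 1 n) : Set ℕ).PairwiseDisjoint
      (fun r => SSYTcontent lam mu (cyc r α)) := by
    intro r hr s' hs' hrs
    have hd : Disjoint (SSYTcontent lam mu (cyc r α)) (SSYTcontent lam mu (cyc s' α)) := by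
      rw [Set.disjoint_left]
      intro T hTr hTs
      apply hrs
      apply hzinj r (Finset.mem_coe.mp hr) s' (Finset.mem_coe.mp hs')
      unfold zwt
      apply Finset.sum_congr rfl
      intro j _
      rw [← hTr.1 j, ← hTs.1 j]
    exact hd
  have hW : ∀ r : ℕ, ∀ T ∈ SSYTcontent lam mu (cyc r α), weightedSum n T = zwt α r := by
    intro r T hT
    unfold weightedSum zwt
    exact Finset.sum_congr rfl fun j _ => by rw [hT.1 j]
  have hX' : Xset = ⋃ r ∈ (↑(Finset.Icc 1 n) : Set ℕ), SSYTcontent lam mu (cyc r α) := by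
    rw [hX]
    rfl
  have hfq : ∀ q : ℂ, f q = ∑ r ∈ Finset.Icc 1 n,
      (Nat.card (SSYTcontent lam mu (cyc r α)) : ℂ) * q ^ zwt α r := by
    intro q
    rw [hf q, hX', finsum_mem_biUnion hdisj (Finset.finite_toSet _)
      (fun r _ => hfin (cyc r α)), finsum_mem_coe_finset]
    apply Finset.sum_congr rfl
    intro r _
    have h1 : ∑ᶠ T ∈ SSYTcontent lam mu (cyc r α), q ^ weightedSum n T
        = ∑ᶠ T ∈ SSYTcontent lam mu (cyc r α), q ^ zwt α r :=
      finsum_mem_congr rfl (fun T hT => by rw [hW r T hT])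
    have h2 : (hfin (cyc r α)).toFinset.card
        = Nat.card (SSYTcontent lam mu (cyc r α)) :=
      (Set.ncard_eq_toFinset_card _ (hfin (cyc r α))).symm.trans
        (Nat.card_coe_set_eq _).symm
    conv_lhs => rw [h1, ← Set.Finite.coe_toFinset (hfin (cyc r α))]
    rw [finsum_mem_coe_finset, Finset.sum_const, nsmul_eq_mul, h2]
  have hcard : ∀ r : ℕ, Nat.card (SSYTcontent lam mu (cyc r α))
      = Nat.card (SSYTcontent lam mu α) := fun r => card_cyc hn α r
  have hXfin : Xset.Finite := by
    rw [hX]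
    exact Set.Finite.biUnion (Finset.finite_toSet _) (fun r _ => hfin (cyc r α))
  have hf1 : f 1 = (Nat.card ↥Xset : ℂ) := by
    rw [hf 1]
    have h1 : ∑ᶠ T ∈ Xset, (1 : ℂ) ^ weightedSum n T = ∑ᶠ T ∈ Xset, (1 : ℂ) :=
      finsum_mem_congr rfl (fun T _ => one_pow _)
    conv_lhs => rw [h1, ← Set.Finite.coe_toFinset hXfin]
    rw [finsum_mem_coe_finset, Finset.sum_const, nsmul_eq_mul, mul_one]
    congr 1
    exact (Set.ncard_eq_toFinset_card _ hXfin).symm.trans (Nat.card_coe_set_eq _).symm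
  refine ⟨?_, hf1, ?_⟩
  · intro k hk
    have hxne : ξ ≠ 0 := hξ.ne_zero hn.ne'
    have hnz : (0 : ℤ) < (n : ℤ) := by exact_mod_cast hn
    set e := (k % (n : ℤ)).toNat with he
    have hk1 : (e : ℤ) = k % (n : ℤ) := Int.toNat_of_nonneg (Int.emod_nonneg k (by omega))
    have he1 : 0 < e := by
      rcases Nat.eq_zero_or_pos e with h0 | h0
      · exfalso
        apply hk
        apply Int.dvd_of_emod_eq_zero
        rw [← hk1, h0]
        simp
      · exact h0
    have he2 : e < n := by
      have := Int.emod_lt_of_pos k hnz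
      omega
    have hxk : ξ ^ k = ξ ^ e := by
      have hsplit : k = (n : ℤ) * (k / (n : ℤ)) + k % (n : ℤ) :=
        (Int.mul_ediv_add_emod k (n : ℤ)).symm
      calc ξ ^ k = ξ ^ ((n : ℤ) * (k / (n : ℤ)) + k % (n : ℤ)) := by rw [← hsplit]
        _ = ξ ^ ((n : ℤ) * (k / (n : ℤ))) * ξ ^ (k % (n : ℤ)) := zpow_add₀ hxne _ _
        _ = (ξ ^ (n : ℤ)) ^ (k / (n : ℤ)) * ξ ^ ((e : ℤ)) := by rw [← zpow_mul, hk1]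
        _ = (1 : ℂ) ^ (k / (n : ℤ)) * ξ ^ (e : ℕ) := by
            rw [show ξ ^ (n : ℤ) = 1 by rw [zpow_natCast, hξ.pow_eq_one], zpow_natCast]
        _ = ξ ^ (e : ℕ) := by rw [one_zpow, one_mul]
    have hndvd : ¬ n ∣ e * (lam.card - mu.card) := by
      intro hd
      have hcop' : Nat.Coprime n (lam.card - mu.card) := Nat.coprime_comm.mp hcop
      have h5 : n ∣ e := hcop'.dvd_of_dvd_mul_right hd
      have := Nat.le_of_dvd he1 h5
      omega
    set w := ξ ^ (e * (lam.card - mu.card)) with hw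
    have hw1 : w ≠ 1 := fun h => hndvd ((hξ.pow_eq_one_iff_dvd _).mp h)
    have hwne : w ≠ 0 := pow_ne_zero _ hxne
    have hwn : w⁻¹ ^ n = 1 := by
      rw [inv_pow, hw, ← pow_mul, mul_comm (e * (lam.card - mu.card)) n, pow_mul,
        hξ.pow_eq_one, one_pow, inv_one]
    have hwinv1 : w⁻¹ ≠ 1 := by
      rw [Ne, inv_eq_one]
      exact hw1
    have hcong : ∀ r : ℕ, (zwt α r + r * (lam.card - mu.card)) ≡ zwt α 0 [MOD n] := by
      intro r
      rw [← ZMod.natCast_eq_natCast_iff]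
      push_cast
      rw [hzmod r]
      ring
    have hterm : ∀ r ∈ Finset.Icc 1 n, (ξ ^ k) ^ zwt α r
        = ξ ^ (e * zwt α 0) * w⁻¹ ^ r := by
      intro r _
      have hmul : ξ ^ (e * zwt α r) * w ^ r = ξ ^ (e * zwt α 0) := by
        rw [hw, ← pow_mul, ← pow_add]
        apply pow_eq_of_modEq n ξ hξ.pow_eq_one
        calc e * zwt α r + e * (lam.card - mu.card) * r
            = e * (zwt α r + r * (lam.card - mu.card)) := by ring
          _ ≡ e * zwt α 0 [MOD n] := (hcong r).mul_left e
      rw [hxk, ← pow_mul, inv_pow]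
      exact (eq_mul_inv_iff_mul_eq₀ (pow_ne_zero _ hwne)).mpr hmul
    rw [hfq (ξ ^ k)]
    calc ∑ r ∈ Finset.Icc 1 n,
          (Nat.card (SSYTcontent lam mu (cyc r α)) : ℂ) * (ξ ^ k) ^ zwt α r
        = ∑ r ∈ Finset.Icc 1 n, ((Nat.card (SSYTcontent lam mu α) : ℂ)
            * ξ ^ (e * zwt α 0)) * w⁻¹ ^ r := by
          apply Finset.sum_congr rfl
          intro r hr
          rw [hcard r, hterm r hr, mul_assoc]
      _ = ((Nat.card (SSYTcontent lam mu α) : ℂ) * ξ ^ (e * zwt α 0))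
            * ∑ r ∈ Finset.Icc 1 n, w⁻¹ ^ r := by rw [Finset.mul_sum]
      _ = 0 := by rw [geom_vanish n w⁻¹ hwn hwinv1, mul_zero]
  · have hfone : f 1 = ((n * Nat.card (SSYTcontent lam mu α) : ℕ) : ℂ) := by
      rw [hfq 1]
      have h3 : ∀ r ∈ Finset.Icc 1 n,
          (Nat.card (SSYTcontent lam mu (cyc r α)) : ℂ) * (1 : ℂ) ^ zwt α r
          = (Nat.card (SSYTcontent lam mu α) : ℂ) := by
        intro r _
        rw [one_pow, mul_one, hcard r]
      rw [Finset.sum_congr rfl h3, Finset.sum_const, Nat.card_Icc]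
      have h99 : n + 1 - 1 = n := by omega
      rw [h99, nsmul_eq_mul]
      push_cast
      ring
    have hcast := hf1.symm.trans hfone
    exact_mod_cast hcast
end
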